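/- arXiv:0906.5010 — 7 statements merged into one kernel-verified Lean document; each statement's English description precedes it below -/
import Mathlib

section
/- Assume s is special for S with parameter α, and let ⟨u,v⟩ be a dominant directed edge of G_S. Then the dominant path to v contains the edge (u,v). -/
open MeasureTheory SimpleGraph

namespace CF

variable {V : Type} [Fintype V] [DecidableEq V]

/-- The subgraph of `G` induced on the vertex set `S` (kept as a graph on `V`). -/
def inducedSub (G : SimpleGraph V) (S : Set V) : SimpleGraph V where
  Adj u v := u ∈ S ∧ v ∈ S ∧ G.Adj u v
  symm := ⟨fun u v h => ⟨h.2.1, h.1, h.2.2.symm⟩⟩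
  loopless := ⟨fun v h => G.loopless.irrefl v h.2.2⟩

/-- The space of walks in `G` starting at `s` of length at most `ℓ`
(a lazy walk of length `ℓ` induces such a walk after deleting self-loops). -/
def WalkSpace (G : SimpleGraph V) (s : V) (ℓ : ℕ) : Type :=
  Σ t : V, {w : G.Walk s t // w.length ≤ ℓ}

instance (G : SimpleGraph V) (s : V) (ℓ : ℕ) : MeasurableSpace (WalkSpace G s ℓ) := ⊤

variable {G : SimpleGraph V} {s : V} {ℓ : ℕ}

/-- The walk `W` reaches the vertex `v`. -/
def Reaches (W : WalkSpace G s ℓ) (v : V) : Prop := v ∈ W.2.1.support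

/-- The simple path from `s` to `v` induced by a walk `W` reaching `v`:
truncate `W` at its first visit to `v` and delete retraced segments. -/
def inducedPath (W : WalkSpace G s ℓ) (v : V) (h : Reaches W v) : G.Walk s v :=
  (W.2.1.takeUntil v h).bypass

/-- `s` is special for `S` with parameter `α`: every vertex of `S` is reached
by a `μ`-random walk with probability at least `α`. -/
def Special (μ : Measure (WalkSpace G s ℓ)) (S : Finset V) (α : ℝ) : Prop :=
  ∀ v ∈ S, α ≤ (μ {W | Reaches W v}).toReal

/-- `P` is a dominant path to `v`: `P` is a simple path from `s` to `v`, more than half of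
the probability mass of walks reaching `v` induce `P` at `v`, and the probability of
reaching `v` inducing a path different from `P` is less than `α/2`. -/
def IsDominantPath (μ : Measure (WalkSpace G s ℓ)) (α : ℝ) (v : V) (P : G.Walk s v) : Prop :=
  P.IsPath ∧
    (μ {W | Reaches W v}).toReal / 2 <
      (μ {W | ∃ h : Reaches W v, inducedPath W v h = P}).toReal ∧
    (μ {W | ∃ h : Reaches W v, inducedPath W v h ≠ P}).toReal < α / 2

/-- `v` is isolated: it has a dominant path. -/
def Isolated (μ : Measure (WalkSpace G s ℓ)) (α : ℝ) (v : V) : Prop :=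
  ∃ P : G.Walk s v, IsDominantPath μ α v P

/-- The directed edge `⟨u,v⟩` of `G_S` is dominant. -/
def Dominant (μ : Measure (WalkSpace G s ℓ)) (S : Finset V) (α : ℝ) (u v : V) : Prop :=
  u ∈ S ∧ v ∈ S ∧ G.Adj u v ∧ Isolated μ α v ∧
    (μ {W | ∃ h : Reaches W v, s(u, v) ∉ (inducedPath W v h).edges}).toReal < α / 2

/-- The undirected edge `(u,v)` of `G_S` is recessive. -/
def Recessive (μ : Measure (WalkSpace G s ℓ)) (S : Finset V) (α : ℝ) (u v : V) : Prop :=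
  u ∈ S ∧ v ∈ S ∧ G.Adj u v ∧ ¬ Dominant μ S α u v ∧ ¬ Dominant μ S α v u

/-- Two walks form a cycle if the subgraph of `G` induced on the union of their
vertex sets contains a cycle. -/
def FormsCycle (W W' : WalkSpace G s ℓ) : Prop :=
  ¬ (inducedSub G ({v | Reaches W v} ∪ {v | Reaches W' v})).IsAcyclic

/-- `cyc_W`: the probability that an independent `μ`-random walk forms a cycle with `W`. -/
noncomputable def cycProb (μ : Measure (WalkSpace G s ℓ)) (W : WalkSpace G s ℓ) : ℝ :=
  (μ {W' | FormsCycle W W'}).toReal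

/-- `W` is heavy if `cyc_W > 1/√n`. -/
def Heavy (μ : Measure (WalkSpace G s ℓ)) (W : WalkSpace G s ℓ) : Prop :=
  1 / Real.sqrt (Fintype.card V) < cycProb μ W

/-- `W` is light if it is not heavy. -/
def Light (μ : Measure (WalkSpace G s ℓ)) (W : WalkSpace G s ℓ) : Prop := ¬ Heavy μ W

/-- `q^H_v`: the probability that a `μ`-random walk is heavy and reaches `v`. -/
noncomputable def qH (μ : Measure (WalkSpace G s ℓ)) (v : V) : ℝ :=
  (μ {W | Heavy μ W ∧ Reaches W v}).toReal

/-- `v` is blue if `q^H_v > α/4`. -/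
def Blue (μ : Measure (WalkSpace G s ℓ)) (α : ℝ) (v : V) : Prop := α / 4 < qH μ v

/-- The event `E_w` on a pair of independent walks: both walks are light and either
(i) both reach `w` and induce distinct paths at `w`, or (ii) one reaches `w`, the other
reaches a `G_S`-neighbor `u` of `w`, and the edge sets of the two induced paths together
with the edge `(u,w)` contain a cycle. -/
def EventE (μ : Measure (WalkSpace G s ℓ)) (S : Finset V) (w : V)
    (p : WalkSpace G s ℓ × WalkSpace G s ℓ) : Prop :=
  Light μ p.1 ∧ Light μ p.2 ∧
    ((∃ (h1 : Reaches p.1 w) (h2 : Reaches p.2 w),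
        inducedPath p.1 w h1 ≠ inducedPath p.2 w h2) ∨
      (∃ u, u ∈ S ∧ w ∈ S ∧ G.Adj u w ∧
        ((∃ (h1 : Reaches p.1 w) (h2 : Reaches p.2 u),
            ¬ (SimpleGraph.fromEdgeSet
                ({e | e ∈ (inducedPath p.1 w h1).edges} ∪
                  {e | e ∈ (inducedPath p.2 u h2).edges} ∪ {s(u, w)})).IsAcyclic) ∨
          (∃ (h1 : Reaches p.2 w) (h2 : Reaches p.1 u),
            ¬ (SimpleGraph.fromEdgeSet
                ({e | e ∈ (inducedPath p.2 w h1).edges} ∪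
                  {e | e ∈ (inducedPath p.1 u h2).edges} ∪ {s(u, w)})).IsAcyclic))))

end CF

/-- If `⟨u,v⟩` is a dominant directed edge of `G_S`, then the dominant path
to `v` contains the edge `(u,v)`. -/
theorem stmt0 {V : Type} [Fintype V] [DecidableEq V]
    (G : SimpleGraph V) [DecidableRel G.Adj] (d : ℕ) (hd : 1 ≤ d)
    (hdeg : ∀ v, G.degree v ≤ d)
    (S : Finset V) (s : V) (hs : s ∈ S) (ℓ : ℕ)
    (μ : MeasureTheory.Measure (CF.WalkSpace G s ℓ)) [MeasureTheory.IsProbabilityMeasure μ]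
    (α : ℝ) (hα : 0 < α) (hspec : CF.Special μ S α)
    (u v : V) (hdom : CF.Dominant μ S α u v)
    (P : G.Walk s v) (hP : CF.IsDominantPath μ α v P) :
    s(u, v) ∈ P.edges := by
  by_contra hne
  have hq : α ≤ (μ {W | CF.Reaches W v}).toReal := hspec v hdom.2.1
  have hsub : {W : CF.WalkSpace G s ℓ | ∃ h : CF.Reaches W v, CF.inducedPath W v h = P} ⊆
      {W | ∃ h : CF.Reaches W v, s(u, v) ∉ (CF.inducedPath W v h).edges} := by
    rintro W ⟨h, hWP⟩
    exact ⟨h, by rw [hWP]; exact hne⟩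
  have hmono : (μ {W : CF.WalkSpace G s ℓ | ∃ h : CF.Reaches W v, CF.inducedPath W v h = P}).toReal
      ≤ (μ {W | ∃ h : CF.Reaches W v, s(u, v) ∉ (CF.inducedPath W v h).edges}).toReal :=
    ENNReal.toReal_mono (measure_ne_top μ _) (measure_mono hsub)
  have h1 := hP.2.1
  have h2 := hdom.2.2.2.2
  linarith
end

section
/- Assume s is special for S with parameter α. Then for every edge (u,v) of G_S, the directed edges ⟨u,v⟩ and ⟨v,u⟩ are not both dominant. -/
open MeasureTheory SimpleGraph

lemma CF.takeUntil_start' {V : Type} [DecidableEq V] {G : SimpleGraph V} {a b : V} (w : G.Walk a b)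
    (h : a ∈ w.support) : w.takeUntil a h = SimpleGraph.Walk.nil := by
  cases w with
  | nil => rfl
  | cons r p => simp!

lemma CF.takeUntil_cons' {V : Type} [DecidableEq V] {G : SimpleGraph V} {a c b u : V}
    (r : G.Adj a c) (p : G.Walk c b) (h : u ∈ (SimpleGraph.Walk.cons r p).support) (hne : a ≠ u)
    (h' : u ∈ p.support) :
    (SimpleGraph.Walk.cons r p).takeUntil u h = SimpleGraph.Walk.cons r (p.takeUntil u h') := by
  simp! [hne]

lemma CF.key_takeUntil {V : Type} [DecidableEq V] {G : SimpleGraph V} {u v : V} :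
    ∀ {a b : V} (w : G.Walk a b) (hv : v ∈ w.support) (hu' : u ∈ w.support),
      u ∈ (w.takeUntil v hv).support → u ≠ v → v ∉ (w.takeUntil u hu').support := by
  intro a b w
  induction w with
  | nil =>
    intro hv hu' hu hne
    rw [SimpleGraph.Walk.mem_support_nil_iff] at hv hu'
    exact absurd (hu'.trans hv.symm) hne
  | @cons a c b r p ih =>
    intro hv hu' hu hne
    by_cases hav : a = v
    · subst hav
      rw [CF.takeUntil_start'] at hu
      simp only [SimpleGraph.Walk.support_nil, List.mem_singleton] at hu
      exact absurd hu hne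
    · have hv' : v ∈ p.support := by
        rcases List.mem_cons.mp (SimpleGraph.Walk.support_cons r p ▸ hv) with h | h
        · exact absurd h.symm hav
        · exact h
      by_cases hau : a = u
      · subst hau
        rw [CF.takeUntil_start']
        simp only [SimpleGraph.Walk.support_nil, List.mem_singleton]
        exact fun h => hav h.symm
      · have hu'' : u ∈ p.support := by
          rcases List.mem_cons.mp (SimpleGraph.Walk.support_cons r p ▸ hu') with h | h
          · exact absurd h.symm hau
          · exact h
        have hup : u ∈ (p.takeUntil v hv').support := by
          rw [CF.takeUntil_cons' r p hv hav hv'] at hu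
          rcases List.mem_cons.mp (SimpleGraph.Walk.support_cons r _ ▸ hu) with h | h
          · exact absurd h.symm hau
          · exact h
        rw [CF.takeUntil_cons' r p hu' hau hu'']
        rw [SimpleGraph.Walk.support_cons, List.mem_cons]
        push_neg
        exact ⟨fun h => hav h.symm, ih hv' hu'' hup hne⟩

/-- For every edge `(u,v)` of `G_S`, the directed edges `⟨u,v⟩` and `⟨v,u⟩`
are not both dominant. -/
theorem stmt1 {V : Type} [Fintype V] [DecidableEq V]
    (G : SimpleGraph V) [DecidableRel G.Adj] (d : ℕ) (hd : 1 ≤ d)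
    (hdeg : ∀ v, G.degree v ≤ d)
    (S : Finset V) (s : V) (hs : s ∈ S) (ℓ : ℕ)
    (μ : MeasureTheory.Measure (CF.WalkSpace G s ℓ)) [MeasureTheory.IsProbabilityMeasure μ]
    (α : ℝ) (hα : 0 < α) (hspec : CF.Special μ S α)
    (u v : V) (hu : u ∈ S) (hv : v ∈ S) (huv : G.Adj u v) :
    ¬ (CF.Dominant μ S α u v ∧ CF.Dominant μ S α v u) := by
  rintro ⟨⟨-, -, -, ⟨P, hPpath, hPhalf, -⟩, hPedge⟩, ⟨-, -, -, -, hQedge⟩⟩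
  have hαq : α ≤ (μ {W | CF.Reaches W v}).toReal := hspec v hv
  set A : Set (CF.WalkSpace G s ℓ) :=
    {W | ∃ h : CF.Reaches W v, CF.inducedPath W v h = P} with hA
  have hAbig : α / 2 < (μ A).toReal := lt_of_le_of_lt (by linarith) hPhalf
  -- the dominant path P contains the edge s(u,v)
  have hedgeP : s(u, v) ∈ P.edges := by
    by_contra hne
    have hsub : A ⊆ {W | ∃ h : CF.Reaches W v, s(u, v) ∉ (CF.inducedPath W v h).edges} := by
      rintro W ⟨h, rfl⟩
      exact ⟨h, hne⟩
    have := ENNReal.toReal_mono (MeasureTheory.measure_ne_top μ _)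
      (MeasureTheory.measure_mono hsub)
    linarith
  -- every walk inducing P at v reaches u with induced path avoiding s(v,u)
  have hsub : A ⊆ {W | ∃ h : CF.Reaches W u, s(v, u) ∉ (CF.inducedPath W u h).edges} := by
    rintro W ⟨h, hWP⟩
    have huP : u ∈ P.support := P.fst_mem_support_of_mem_edges hedgeP
    have hutu : u ∈ (W.2.1.takeUntil v h).support := by
      apply SimpleGraph.Walk.support_bypass_subset
      rw [show (W.2.1.takeUntil v h).bypass = P from hWP]
      exact huP
    have hru : CF.Reaches W u := W.2.1.support_takeUntil_subset h hutu
    refine ⟨hru, fun hcon => ?_⟩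
    have hvmem : v ∈ (CF.inducedPath W u hru).support :=
      (CF.inducedPath W u hru).fst_mem_support_of_mem_edges hcon
    have : v ∈ (W.2.1.takeUntil u hru).support :=
      SimpleGraph.Walk.support_bypass_subset _ hvmem
    exact CF.key_takeUntil W.2.1 h hru hutu huv.ne this
  have := ENNReal.toReal_mono (MeasureTheory.measure_ne_top μ _)
    (MeasureTheory.measure_mono hsub)
  linarith
end

section
/- Assume s is special for S with parameter α. Then the set of dominant edges forms a directed forest; in particular, the set of undirected edges (u,v) of G_S such that ⟨u,v⟩ or ⟨v,u⟩ is dominant contains no cycle of G. -/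
open MeasureTheory SimpleGraph

section WalkAux
variable {V : Type} [DecidableEq V] {G : SimpleGraph V}

lemma CFaux.takeUntil_start {a c : V} (q : G.Walk a c) (h : a ∈ q.support) :
    q.takeUntil a h = Walk.nil := by
  cases q with
  | nil => rfl
  | cons r p => simp [Walk.takeUntil]

lemma CFaux.dropUntil_start {a c : V} (q : G.Walk a c) (h : a ∈ q.support) :
    q.dropUntil a h = q := by
  cases q with
  | nil => rfl
  | cons r p => simp [Walk.dropUntil]

lemma CFaux.takeUntil_congr {a b u : V} {p q : G.Walk a b} (h : p = q) (hp : u ∈ p.support) :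
    p.takeUntil u hp = q.takeUntil u (h ▸ hp) := by subst h; rfl

lemma CFaux.dropUntil_congr {a b u : V} {p q : G.Walk a b} (h : p = q) (hp : u ∈ p.support) :
    p.dropUntil u hp = q.dropUntil u (h ▸ hp) := by subst h; rfl

lemma CFaux.takeUntil_append_left' {u : V} : ∀ {a b c : V} (P : G.Walk a b) (Q : G.Walk b c)
    (hu : u ∈ P.support) (h' : u ∈ (P.append Q).support),
    (P.append Q).takeUntil u h' = P.takeUntil u hu := by
  intro a b c P
  induction P with
  | nil =>
    intro Q hu h'
    rw [Walk.mem_support_nil_iff] at hu; subst hu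
    rw [CFaux.takeUntil_start, CFaux.takeUntil_start]
  | @cons x y z r p ih =>
    intro Q hu h'
    by_cases hx : x = u
    · subst hx; rw [CFaux.takeUntil_start, CFaux.takeUntil_start]
    · have hu' : u ∈ p.support := by
        rw [Walk.support_cons] at hu
        cases List.mem_cons.mp hu with
        | inl h => exact absurd h.symm hx
        | inr h => exact h
      change (Walk.cons r (p.append Q)).takeUntil u h' = (Walk.cons r p).takeUntil u hu
      simp only [Walk.takeUntil, dif_neg hx]
      exact congrArg (Walk.cons r) (ih Q hu' _)

lemma CFaux.dropUntil_append_left' {u : V} : ∀ {a b c : V} (P : G.Walk a b) (Q : G.Walk b c)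
    (hu : u ∈ P.support) (h' : u ∈ (P.append Q).support),
    (P.append Q).dropUntil u h' = (P.dropUntil u hu).append Q := by
  intro a b c P
  induction P with
  | nil =>
    intro Q hu h'
    rw [Walk.mem_support_nil_iff] at hu; subst hu
    rw [CFaux.dropUntil_start, CFaux.dropUntil_start]
  | @cons x y z r p ih =>
    intro Q hu h'
    by_cases hx : x = u
    · subst hx; rw [CFaux.dropUntil_start, CFaux.dropUntil_start]
    · have hu' : u ∈ p.support := by
        rw [Walk.support_cons] at hu
        cases List.mem_cons.mp hu with
        | inl h => exact absurd h.symm hx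
        | inr h => exact h
      change (Walk.cons r (p.append Q)).dropUntil u h' = ((Walk.cons r p).dropUntil u hu).append Q
      simp only [Walk.dropUntil, dif_neg hx]
      exact ih Q hu' _

lemma CFaux.dropUntil_append_right' {u : V} : ∀ {a b c : V} (P : G.Walk a b) (Q : G.Walk b c),
    u ∉ P.support → ∀ (hQ : u ∈ Q.support) (h' : u ∈ (P.append Q).support),
    (P.append Q).dropUntil u h' = Q.dropUntil u hQ := by
  intro a b c P
  induction P with
  | nil => intro Q hu hQ h'; rfl
  | @cons x y z r p ih =>
    intro Q hu hQ h'
    have hx : ¬ x = u := fun h => hu (h ▸ Walk.start_mem_support (Walk.cons r p))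
    have hu' : u ∉ p.support := fun h =>
      hu (by rw [Walk.support_cons]; exact List.mem_cons.mpr (Or.inr h))
    change (Walk.cons r (p.append Q)).dropUntil u h' = Q.dropUntil u hQ
    simp only [Walk.dropUntil, dif_neg hx]
    exact ih Q hu' hQ _

lemma CFaux.path_start_not_mem_dropUntil {u v x : V} (q : G.Walk u v) (hq : q.IsPath)
    (hx : x ∈ q.support) (hxu : x ≠ u) : u ∉ (q.dropUntil x hx).support := by
  intro hmem
  have hnodup := hq.support_nodup
  rw [← q.take_spec hx, Walk.support_append] at hnodup
  have h1 : u ∈ (q.takeUntil x hx).support := Walk.start_mem_support _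
  have h2 : u ∈ (q.dropUntil x hx).support.tail := by
    have hcons := Walk.support_eq_cons (q.dropUntil x hx)
    rw [hcons] at hmem
    cases List.mem_cons.mp hmem with
    | inl h => exact absurd h.symm hxu
    | inr h => exact h
  exact (List.disjoint_of_nodup_append hnodup) h1 h2

lemma CFaux.bypass_append : ∀ {a u : V} (W1 : G.Walk a u) {v : V} (W2 : G.Walk u v),
    W1.support.count u = 1 → u ∈ ((W1.append W2).bypass).support →
    (W1.append W2).bypass = W1.bypass.append W2.bypass := by
  intro a u W1
  induction W1 with
  | nil => intro v W2 hc hu; rfl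
  | @cons x y z r p ih =>
    intro v W2 hc hu
    have hxu : x ≠ z := by
      intro h
      rw [Walk.support_cons, h, List.count_cons_self] at hc
      have hpos : 0 < List.count z p.support := List.count_pos_iff.mpr p.end_mem_support
      omega
    have hcp : p.support.count z = 1 := by
      rw [Walk.support_cons] at hc
      simpa [List.count_cons, hxu] using hc
    change z ∈ (Walk.cons r (p.append W2)).bypass.support at hu
    show (Walk.cons r (p.append W2)).bypass = (Walk.cons r p).bypass.append W2.bypass
    simp only [Walk.bypass] at hu ⊢
    by_cases hs : x ∈ (p.append W2).bypass.support
    · rw [dif_pos hs] at hu ⊢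
      have hu' : z ∈ (p.append W2).bypass.support :=
        Walk.support_dropUntil_subset _ hs hu
      have hIH := ih W2 hcp hu'
      by_cases hps : x ∈ p.bypass.support
      · rw [dif_pos hps]
        rw [CFaux.dropUntil_congr hIH hs]
        exact CFaux.dropUntil_append_left' _ _ hps _
      · have hws : x ∈ W2.bypass.support := by
          have := hIH ▸ hs
          cases (Walk.mem_support_append_iff _ _).mp this with
          | inl h => exact absurd h hps
          | inr h => exact h
        exfalso
        rw [CFaux.dropUntil_congr hIH hs, CFaux.dropUntil_append_right' _ _ hps hws] at hu
        exact CFaux.path_start_not_mem_dropUntil W2.bypass (Walk.bypass_isPath _) hws hxu hu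
    · rw [dif_neg hs] at hu ⊢
      have hu' : z ∈ (p.append W2).bypass.support := by
        rw [Walk.support_cons] at hu
        cases List.mem_cons.mp hu with
        | inl h => exact absurd h.symm hxu
        | inr h => exact h
      have hIH := ih W2 hcp hu'
      have hps : x ∉ p.bypass.support := fun h =>
        hs (hIH ▸ (Walk.mem_support_append_iff _ _).mpr (Or.inl h))
      rw [dif_neg hps, Walk.cons_append, hIH]

lemma CFaux.edge_start_unique : ∀ {v c : V} (q : G.Walk v c), q.IsPath →
    ∀ {u u' : V}, s(u, v) ∈ q.edges → s(u', v) ∈ q.edges → u = u' := by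
  intro v c q
  induction q with
  | nil => intro _ u u' h _; simp at h
  | @cons x y z r p ih =>
    intro hq u u' h h'
    have key : ∀ w, s(w, x) ∈ (Walk.cons r p).edges → w = y := by
      intro w hw
      rw [Walk.edges_cons] at hw
      cases List.mem_cons.mp hw with
      | inl he =>
        rcases Sym2.eq_iff.mp he with ⟨hwx, hxy⟩ | ⟨hwy, _⟩
        · exact absurd (hxy ▸ r) (G.loopless.irrefl x)
        · exact hwy
      | inr hp =>
        exfalso
        have : x ∈ p.support := Walk.snd_mem_support_of_mem_edges p hp
        exact ((Walk.cons_isPath_iff r p).mp hq).2 this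
    exact (key u h).trans (key u' h').symm

lemma CFaux.edge_end_unique {a v : V} (p : G.Walk a v) (hp : p.IsPath) {u u' : V}
    (h : s(u, v) ∈ p.edges) (h' : s(u', v) ∈ p.edges) : u = u' := by
  refine CFaux.edge_start_unique p.reverse hp.reverse ?_ ?_ <;>
    rw [Walk.edges_reverse, List.mem_reverse] <;> assumption

end WalkAux

section ProbAux
open CF
variable {V : Type} [Fintype V] [DecidableEq V] {G : SimpleGraph V} {s : V} {ℓ : ℕ}
  {μ : Measure (WalkSpace G s ℓ)} [IsProbabilityMeasure μ] {S : Finset V} {α : ℝ}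

lemma CFaux.toReal_mono_sub {A B : Set (WalkSpace G s ℓ)} (h : A ⊆ B) :
    (μ A).toReal ≤ (μ B).toReal :=
  ENNReal.toReal_mono (measure_ne_top μ B) (measure_mono h)

lemma CFaux.diff_nonempty {A B : Set (WalkSpace G s ℓ)} (h : (μ B).toReal < (μ A).toReal) :
    (A \ B).Nonempty := by
  rw [Set.nonempty_iff_ne_empty]
  intro he
  rw [Set.diff_eq_empty] at he
  exact absurd (CFaux.toReal_mono_sub (μ := μ) he) (not_le.mpr h)

lemma CFaux.toReal_le_add {R A B : Set (WalkSpace G s ℓ)} (h : R ⊆ A ∪ B) :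
    (μ R).toReal ≤ (μ A).toReal + (μ B).toReal := by
  refine le_trans (CFaux.toReal_mono_sub h) ?_
  rw [← ENNReal.toReal_add (measure_ne_top μ A) (measure_ne_top μ B)]
  exact ENNReal.toReal_mono (by simp [ENNReal.add_ne_top, measure_ne_top]) (measure_union_le A B)

lemma CFaux.dominant_path_unique {v : V} {P P' : G.Walk s v}
    (h1 : IsDominantPath μ α v P) (h2 : IsDominantPath μ α v P') : P = P' := by
  by_contra hne
  set A := {W : WalkSpace G s ℓ | ∃ h : Reaches W v, inducedPath W v h = P} with hA
  set A' := {W : WalkSpace G s ℓ | ∃ h : Reaches W v, inducedPath W v h = P'} with hA'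
  have hdisj : Disjoint A A' := by
    rw [Set.disjoint_left]
    rintro W ⟨h, e⟩ ⟨h', e'⟩
    exact hne (e.symm.trans e')
  have hsub : A ∪ A' ⊆ {W : WalkSpace G s ℓ | Reaches W v} := by
    rintro W (⟨h, _⟩ | ⟨h, _⟩) <;> exact h
  have hun : (μ (A ∪ A')).toReal = (μ A).toReal + (μ A').toReal := by
    rw [measure_union hdisj trivial, ENNReal.toReal_add (measure_ne_top μ A) (measure_ne_top μ A')]
  have hle := CFaux.toReal_mono_sub (μ := μ) hsub
  have h1' := h1.2.1
  have h2' := h2.2.1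
  rw [hun] at hle
  linarith

lemma CFaux.half_lt (hspec : Special μ S α) {v : V} (hvS : v ∈ S)
    {P : G.Walk s v} (hP : IsDominantPath μ α v P) :
    α / 2 < (μ {W : WalkSpace G s ℓ | ∃ h : Reaches W v, inducedPath W v h = P}).toReal := by
  have hR : α ≤ (μ {W : WalkSpace G s ℓ | Reaches W v}).toReal := hspec v hvS
  have hsub : {W : WalkSpace G s ℓ | Reaches W v} ⊆
      {W | ∃ h : Reaches W v, inducedPath W v h = P} ∪
      {W | ∃ h : Reaches W v, inducedPath W v h ≠ P} := by
    intro W hW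
    by_cases h : inducedPath W v hW = P
    · exact Or.inl ⟨hW, h⟩
    · exact Or.inr ⟨hW, h⟩
  have := CFaux.toReal_le_add (μ := μ) hsub
  have hbad := hP.2.2
  linarith

lemma CFaux.edge_mem (hspec : Special μ S α) {u v : V}
    (hD : Dominant μ S α u v) {P : G.Walk s v} (hP : IsDominantPath μ α v P) :
    s(u, v) ∈ P.edges := by
  obtain ⟨W, hWA, hWB⟩ := CFaux.diff_nonempty (μ := μ)
    (lt_trans hD.2.2.2.2 (CFaux.half_lt hspec hD.2.1 hP))
  obtain ⟨h, hind⟩ := hWA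
  have hW := not_exists.mp hWB h
  exact hind ▸ (not_not.mp hW)

lemma CFaux.exists_common (hspec : Special μ S α) {u v : V} (hD : Dominant μ S α u v)
    {Pv : G.Walk s v} (hPv : IsDominantPath μ α v Pv)
    {Pu : G.Walk s u} (hPu : IsDominantPath μ α u Pu) :
    ∃ (W : WalkSpace G s ℓ) (hv : Reaches W v) (hu : Reaches W u),
      inducedPath W v hv = Pv ∧ inducedPath W u hu = Pu := by
  have hedge := CFaux.edge_mem hspec hD hPv
  have huP : u ∈ Pv.support := Walk.fst_mem_support_of_mem_edges Pv hedge
  obtain ⟨W, hWA, hWB⟩ := CFaux.diff_nonempty (μ := μ)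
    (B := {W : WalkSpace G s ℓ | ∃ h : Reaches W u, inducedPath W u h ≠ Pu})
    (lt_trans hPu.2.2 (CFaux.half_lt hspec hD.2.1 hPv))
  obtain ⟨hv, hind⟩ := hWA
  have hu : Reaches W u := by
    have h1 : u ∈ (inducedPath W v hv).support := hind.symm ▸ huP
    have h2 : u ∈ (W.2.1.takeUntil v hv).support :=
      Walk.support_bypass_subset _ h1
    exact Walk.support_takeUntil_subset _ hv h2
  refine ⟨W, hv, hu, hind, ?_⟩
  by_contra hne
  exact hWB ⟨hu, hne⟩

end ProbAux

section KeyLemma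
open CF
variable {V : Type} [Fintype V] [DecidableEq V] {G : SimpleGraph V} {s : V} {ℓ : ℕ}
  {μ : MeasureTheory.Measure (WalkSpace G s ℓ)} [MeasureTheory.IsProbabilityMeasure μ]
  {S : Finset V} {α : ℝ}

lemma CFaux.length_lt (hspec : Special μ S α) {u v : V}
    (hD : Dominant μ S α u v) {Pv : G.Walk s v} (hPv : IsDominantPath μ α v Pv)
    {Pu : G.Walk s u} (hPu : IsDominantPath μ α u Pu) : Pu.length < Pv.length := by
  obtain ⟨W, hv, hu, hiv, hiu⟩ := CFaux.exists_common hspec hD hPv hPu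
  have hedge := CFaux.edge_mem hspec hD hPv
  set T := W.2.1.takeUntil v hv with hT
  have hTb : T.bypass = Pv := hiv
  have hub : u ∈ T.bypass.support := by
    rw [hTb]; exact SimpleGraph.Walk.fst_mem_support_of_mem_edges Pv hedge
  have huT : u ∈ T.support := SimpleGraph.Walk.support_bypass_subset _ hub
  have hspl : (T.takeUntil u huT).append (T.dropUntil u huT) = T := T.take_spec huT
  have hbap : T.bypass = (T.takeUntil u huT).bypass.append (T.dropUntil u huT).bypass := by
    have h2 := CFaux.bypass_append (T.takeUntil u huT) (T.dropUntil u huT)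
      (T.count_support_takeUntil_eq_one huT) (by rw [hspl]; exact hub)
    rw [hspl] at h2; exact h2
  have hW1 : (T.takeUntil u huT).bypass = Pu := by
    have hsplv : T.append (W.2.1.dropUntil v hv) = W.2.1 := W.2.1.take_spec hv
    have hmem' : u ∈ (T.append (W.2.1.dropUntil v hv)).support := by rw [hsplv]; exact hu
    have h3 := CFaux.takeUntil_append_left' T (W.2.1.dropUntil v hv) huT hmem'
    have h4 : W.2.1.takeUntil u hu = (T.append (W.2.1.dropUntil v hv)).takeUntil u hmem' :=
      CFaux.takeUntil_congr hsplv.symm hu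
    have h5 : inducedPath W u hu = (W.2.1.takeUntil u hu).bypass := rfl
    rw [← hiu, h5, h4, h3]
  have hPvapp : Pv = Pu.append (T.dropUntil u huT).bypass := by rw [← hTb, hbap, hW1]
  have hlen : Pv.length = Pu.length + (T.dropUntil u huT).bypass.length := by
    rw [hPvapp, SimpleGraph.Walk.length_append]
  have hne : u ≠ v := (hD.2.2.1).ne
  have hpos : (T.dropUntil u huT).bypass.length ≠ 0 := fun h0 =>
    hne (SimpleGraph.Walk.eq_of_length_eq_zero h0)
  omega
end KeyLemma

/-- The set of dominant edges forms a (directed) forest: there is no cycle of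
`G` all of whose edges have a dominant orientation. -/
theorem stmt3 {V : Type} [Fintype V] [DecidableEq V]
    (G : SimpleGraph V) [DecidableRel G.Adj] (d : ℕ) (hd : 1 ≤ d)
    (hdeg : ∀ v, G.degree v ≤ d)
    (S : Finset V) (s : V) (hs : s ∈ S) (ℓ : ℕ)
    (μ : MeasureTheory.Measure (CF.WalkSpace G s ℓ)) [MeasureTheory.IsProbabilityMeasure μ]
    (α : ℝ) (hα : 0 < α) (hspec : CF.Special μ S α) :
    ¬ ∃ (x : V) (c : G.Walk x x), c.IsCycle ∧
        ∀ e ∈ c.edges, ∃ u v, e = s(u, v) ∧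
          (CF.Dominant μ S α u v ∨ CF.Dominant μ S α v u) := by
  rintro ⟨x, c, hcyc, hdom⟩
  classical
  set f : V → ℕ := fun w => if h : CF.Isolated μ α w then h.choose.length else 0 with hf
  have hfval : ∀ {w : V} (P : G.Walk s w), CF.IsDominantPath μ α w P → f w = P.length := by
    intro w P hP
    have hI : CF.Isolated μ α w := ⟨P, hP⟩
    simp only [hf, dif_pos hI]
    exact congrArg SimpleGraph.Walk.length (CFaux.dominant_path_unique hI.choose_spec hP)
  have hch : ∀ e : Sym2 V, ∃ p : V × V,
      e ∈ c.edges → e = s(p.1, p.2) ∧ CF.Dominant μ S α p.1 p.2 := by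
    intro e
    by_cases he : e ∈ c.edges
    · obtain ⟨u, v, heq, hor⟩ := hdom e he
      rcases hor with h | h
      · exact ⟨(u, v), fun _ => ⟨heq, h⟩⟩
      · exact ⟨(v, u), fun _ => ⟨heq.trans (Sym2.eq_swap), h⟩⟩
    · exact ⟨(x, x), fun h => absurd h he⟩
  choose pr hpr using hch
  set E := c.edges.toFinset with hE
  set Vs := c.support.tail.toFinset with hVs
  have hmemE : ∀ e ∈ E, e ∈ c.edges := fun e he => List.mem_toFinset.mp he
  have hprE : ∀ e ∈ E, e = s((pr e).1, (pr e).2) ∧ CF.Dominant μ S α (pr e).1 (pr e).2 :=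
    fun e he => hpr e (hmemE e he)
  have htail : ∀ w, w ∈ c.support → w ∈ c.support.tail := by
    intro w hw
    cases c with
    | nil => exact absurd rfl hcyc.ne_nil
    | cons r p =>
      rw [SimpleGraph.Walk.support_cons] at hw
      rw [SimpleGraph.Walk.support_cons, List.tail_cons]
      cases List.mem_cons.mp hw with
      | inl h => subst h; exact p.end_mem_support
      | inr h => exact h
  have himg : E.image (fun e => (pr e).2) ⊆ Vs := by
    intro w hw
    obtain ⟨e, he, rfl⟩ := Finset.mem_image.mp hw
    have h1 := (hprE e he).1
    have h2 : (pr e).2 ∈ c.support :=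
      SimpleGraph.Walk.snd_mem_support_of_mem_edges c (h1 ▸ hmemE e he)
    exact List.mem_toFinset.mpr (htail _ h2)
  have hinj : Set.InjOn (fun e => (pr e).2) ↑E := by
    intro e1 he1 e2 he2 hhd
    have he1' : e1 ∈ E := he1
    have he2' : e2 ∈ E := he2
    obtain ⟨heq1, hD1⟩ := hprE e1 he1'
    obtain ⟨heq2, hD2⟩ := hprE e2 he2'
    simp only at hhd
    obtain ⟨Pv, hPv⟩ := hD1.2.2.2.1
    have m1 : s((pr e1).1, (pr e1).2) ∈ Pv.edges := CFaux.edge_mem hspec hD1 hPv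
    rw [← hhd] at hD2
    have m2 : s((pr e2).1, (pr e1).2) ∈ Pv.edges := CFaux.edge_mem hspec hD2 hPv
    have huu := CFaux.edge_end_unique Pv hPv.1 m1 m2
    rw [heq1, heq2, ← hhd, ← huu]
  have hcardE : E.card = c.length := by
    rw [hE, List.toFinset_card_of_nodup hcyc.edges_nodup, SimpleGraph.Walk.length_edges]
  have hcardV : Vs.card = c.length := by
    rw [hVs, List.toFinset_card_of_nodup hcyc.2, List.length_tail,
      SimpleGraph.Walk.length_support]
    omega
  have hsurj : E.image (fun e => (pr e).2) = Vs :=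
    Finset.eq_of_subset_of_card_le himg
      (by rw [Finset.card_image_of_injOn hinj, hcardE, hcardV])
  have hVne : Vs.Nonempty := by
    rw [← Finset.card_pos, hcardV]
    have := hcyc.three_le_length
    omega
  obtain ⟨v0, hv0, hmin⟩ := Vs.exists_min_image f hVne
  rw [← hsurj] at hv0
  obtain ⟨e0, he0, hv0eq⟩ := Finset.mem_image.mp hv0
  obtain ⟨heq0, hD0⟩ := hprE e0 he0
  have hu0 : (pr e0).1 ∈ Vs := by
    have h2 : (pr e0).1 ∈ c.support :=
      SimpleGraph.Walk.fst_mem_support_of_mem_edges c (heq0 ▸ hmemE e0 he0)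
    exact List.mem_toFinset.mpr (htail _ h2)
  have hiso : ∀ w ∈ Vs, CF.Isolated μ α w := by
    intro w hwv
    rw [← hsurj] at hwv
    obtain ⟨e, he, hwe⟩ := Finset.mem_image.mp hwv
    have hI := (hprE e he).2.2.2.2.1
    rw [← hwe]
    exact hI
  obtain ⟨Pu, hPu⟩ := hiso _ hu0
  obtain ⟨Pv, hPv⟩ := hD0.2.2.2.1
  have hlt : Pu.length < Pv.length := CFaux.length_lt hspec hD0 hPv hPu
  have h1 : f (pr e0).1 = Pu.length := hfval Pu hPu
  have h2 : f (pr e0).2 = Pv.length := hfval Pv hPv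
  have h3 : f v0 ≤ f (pr e0).1 := hmin _ hu0
  rw [← hv0eq] at h3
  omega
end

section
/- Assume s is special for S with parameter α, and assume the induced subgraph G_S is ε-far from cycle-free, i.e., every set of edges of G_S whose removal makes G_S a forest has more than ε·|S|·d elements. Then G_S has more than ε·|S|·d recessive edges. -/
open MeasureTheory SimpleGraph

namespace SimpleGraph.Walk
variable {V : Type*} [DecidableEq V] {G : SimpleGraph V} {u v w : V}

lemma takeUntil_start : ∀ {t : V} (p : G.Walk u t) (h : u ∈ p.support), p.takeUntil u h = Walk.nil
  | _, Walk.nil, h => rfl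
  | _, Walk.cons r p, h => by simp [takeUntil]

lemma dropUntil_start : ∀ {t : V} (p : G.Walk u t) (h : u ∈ p.support), p.dropUntil u h = p
  | _, Walk.nil, h => rfl
  | _, Walk.cons r p, h => by simp [dropUntil]

lemma takeUntil_cons' {x y t u : V} {r : G.Adj x y} (p : G.Walk y t) (hne : x ≠ u)
    (h : u ∈ (Walk.cons r p).support) (h' : u ∈ p.support) :
    (Walk.cons r p).takeUntil u h = Walk.cons r (p.takeUntil u h') := by
  simp [takeUntil, hne]

lemma dropUntil_cons {x y t u : V} {r : G.Adj x y} (p : G.Walk y t) (hne : x ≠ u)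
    (h : u ∈ (Walk.cons r p).support) (h' : u ∈ p.support) :
    (Walk.cons r p).dropUntil u h = p.dropUntil u h' := by
  simp [dropUntil, hne]

lemma takeUntil_congr {x t : V} {p q : G.Walk x t} (h : p = q) (hp : u ∈ p.support)
    (hq : u ∈ q.support) : p.takeUntil u hp = q.takeUntil u hq := by subst h; rfl

lemma dropUntil_congr {x t : V} {p q : G.Walk x t} (h : p = q) (hp : u ∈ p.support)
    (hq : u ∈ q.support) : p.dropUntil u hp = q.dropUntil u hq := by subst h; rfl

lemma length_takeUntil_lt' {x t : V} (p : G.Walk x t) (h : u ∈ p.support) (hne : u ≠ t) :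
    (p.takeUntil u h).length < p.length := by
  have hs := congrArg Walk.length (p.take_spec h)
  rw [length_append] at hs
  have : (p.dropUntil u h).length ≠ 0 := fun h0 => hne (eq_of_length_eq_zero h0)
  omega

lemma takeUntil_takeUntil' : ∀ {a b : V} (p : G.Walk a b) (hv : v ∈ p.support)
    (hu : u ∈ (p.takeUntil v hv).support) (hu' : u ∈ p.support),
    (p.takeUntil v hv).takeUntil u hu = p.takeUntil u hu'
  | a, _, Walk.nil, hv, hu, hu' => by
    have hva : v = a := by simpa using hv
    subst hva
    have hua : u = v := by
      have := support_takeUntil_subset _ hv hu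
      simpa using this
    subst hua
    exact (takeUntil_start _ hu).trans (takeUntil_start _ hu').symm
  | a, _, Walk.cons r p, hv, hu, hu' => by
    by_cases hxu : a = u
    · subst hxu
      exact (takeUntil_start _ hu).trans (takeUntil_start _ hu').symm
    · by_cases hxv : a = v
      · subst hxv
        exfalso
        have e := takeUntil_start (Walk.cons r p) hv
        have hu2 : u ∈ (Walk.nil : G.Walk a a).support := e ▸ hu
        have : u = a := by simpa using hu2
        exact hxu this.symm
      · have hv' : v ∈ p.support := by
          rcases (by simpa using hv : v = a ∨ v ∈ p.support) with h | h
          · exact absurd h.symm hxv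
          · exact h
        have e1 := takeUntil_cons' p hxv hv hv'
        have hu2 : u ∈ (Walk.cons r (p.takeUntil v hv')).support := e1 ▸ hu
        have hu3 : u ∈ (p.takeUntil v hv').support := by
          rcases (by simpa using hu2 : u = a ∨ u ∈ (p.takeUntil v hv').support) with h | h
          · exact absurd h.symm hxu
          · exact h
        have hup : u ∈ p.support := p.support_takeUntil_subset hv' hu3
        calc ((Walk.cons r p).takeUntil v hv).takeUntil u hu
            = (Walk.cons r (p.takeUntil v hv')).takeUntil u hu2 :=
              takeUntil_congr e1 hu hu2
          _ = Walk.cons r ((p.takeUntil v hv').takeUntil u hu3) :=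
              takeUntil_cons' _ hxu hu2 hu3
          _ = Walk.cons r (p.takeUntil u hup) := by
              rw [takeUntil_takeUntil' p hv' hu3 hup]
          _ = (Walk.cons r p).takeUntil u hu' := (takeUntil_cons' p hxu hu' hup).symm

lemma mem_takeUntil_of_mem_dropUntil : ∀ {a b : V} (p : G.Walk a b) (hp : p.IsPath)
    (hw : w ∈ p.support) (hu : u ∈ (p.dropUntil w hw).support) (hu' : u ∈ p.support),
    w ∈ (p.takeUntil u hu').support
  | a, _, Walk.nil, hp, hw, hu, hu' => by
    have hwa : w = a := by simpa using hw
    subst hwa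
    exact start_mem_support _
  | a, _, Walk.cons r p, hp, hw, hu, hu' => by
    by_cases hxw : a = w
    · subst hxw
      exact start_mem_support _
    · have hw' : w ∈ p.support := by
        rcases (by simpa using hw : w = a ∨ w ∈ p.support) with h | h
        · exact absurd h.symm hxw
        · exact h
      have e := dropUntil_cons p hxw hw hw'
      have hu2 : u ∈ (p.dropUntil w hw').support := e ▸ hu
      have hup : u ∈ p.support := p.support_dropUntil_subset hw' hu2
      have hxu : a ≠ u := by
        rintro rfl
        exact ((cons_isPath_iff _ _).mp hp).2 hup
      rw [takeUntil_cons' p hxu hu' hup]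
      have := mem_takeUntil_of_mem_dropUntil p ((cons_isPath_iff _ _).mp hp).1 hw' hu2 hup
      simp [this]

lemma dropUntil_takeUntil_comm : ∀ {a b : V} (p : G.Walk a b) (hp : p.IsPath)
    (hw : w ∈ p.support) (hwu : w ≠ u) (hu : u ∈ (p.dropUntil w hw).support)
    (hu' : u ∈ p.support) (hw2 : w ∈ (p.takeUntil u hu').support),
    (p.dropUntil w hw).takeUntil u hu = (p.takeUntil u hu').dropUntil w hw2
  | a, _, Walk.nil, hp, hw, hwu, hu, hu', hw2 => by
    exfalso
    have hwa : w = a := by simpa using hw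
    subst hwa
    have e := dropUntil_start (Walk.nil : G.Walk w w) hw
    have hu2 : u ∈ (Walk.nil : G.Walk w w).support := e ▸ hu
    have : u = w := by simpa using hu2
    exact hwu this.symm
  | a, _, Walk.cons r p, hp, hw, hwu, hu, hu', hw2 => by
    by_cases hxw : a = w
    · subst hxw
      have e := dropUntil_start (Walk.cons r p) hw
      calc ((Walk.cons r p).dropUntil a hw).takeUntil u hu
          = (Walk.cons r p).takeUntil u hu' := takeUntil_congr e hu hu'
        _ = ((Walk.cons r p).takeUntil u hu').dropUntil a hw2 :=
            (dropUntil_start _ hw2).symm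
    · have hw' : w ∈ p.support := by
        rcases (by simpa using hw : w = a ∨ w ∈ p.support) with h | h
        · exact absurd h.symm hxw
        · exact h
      have e := dropUntil_cons p hxw hw hw'
      have hu2 : u ∈ (p.dropUntil w hw').support := e ▸ hu
      have hup : u ∈ p.support := p.support_dropUntil_subset hw' hu2
      have hxu : a ≠ u := by
        rintro rfl
        exact ((cons_isPath_iff _ _).mp hp).2 hup
      have hppath : p.IsPath := ((cons_isPath_iff _ _).mp hp).1
      have hw3 : w ∈ (p.takeUntil u hup).support :=
        mem_takeUntil_of_mem_dropUntil p hppath hw' hu2 hup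
      have e2 := takeUntil_cons' p hxu hu' hup
      have hw4 : w ∈ (Walk.cons r (p.takeUntil u hup)).support := by simp [hw3]
      calc ((Walk.cons r p).dropUntil w hw).takeUntil u hu
          = (p.dropUntil w hw').takeUntil u hu2 := takeUntil_congr e hu hu2
        _ = (p.takeUntil u hup).dropUntil w hw3 :=
            dropUntil_takeUntil_comm p hppath hw' hwu hu2 hup hw3
        _ = (Walk.cons r (p.takeUntil u hup)).dropUntil w hw4 :=
            (dropUntil_cons _ hxw hw4 hw3).symm
        _ = ((Walk.cons r p).takeUntil u hu').dropUntil w hw2 :=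
            dropUntil_congr e2.symm hw4 hw2

lemma bypass_takeUntil : ∀ {a b : V} (p : G.Walk a b) (hu : u ∈ p.bypass.support)
    (hu' : u ∈ p.support), p.bypass.takeUntil u hu = (p.takeUntil u hu').bypass
  | a, _, Walk.nil, hu, hu' => by
    have hua : u = a := by simpa [bypass] using hu
    subst hua
    refine (takeUntil_start _ hu).trans ?_
    rw [takeUntil_start]
    rfl
  | a, _, Walk.cons r p, hu, hu' => by
    by_cases hxu : a = u
    · subst hxu
      refine (takeUntil_start _ hu).trans ?_
      rw [takeUntil_start]
      rfl
    · by_cases hs : a ∈ p.bypass.support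
      · have eB : (Walk.cons r p).bypass = p.bypass.dropUntil a hs := by
          simp [bypass, hs]
        have hu2 : u ∈ (p.bypass.dropUntil a hs).support := eB ▸ hu
        have huq : u ∈ p.bypass.support := p.bypass.support_dropUntil_subset hs hu2
        have hup : u ∈ p.support := p.support_bypass_subset huq
        have hwt : a ∈ (p.bypass.takeUntil u huq).support :=
          mem_takeUntil_of_mem_dropUntil p.bypass p.bypass_isPath hs hu2 huq
        have eIH := bypass_takeUntil p huq hup
        have hwt2 : a ∈ (p.takeUntil u hup).bypass.support := eIH ▸ hwt
        have eB2 : (Walk.cons r (p.takeUntil u hup)).bypass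
            = (p.takeUntil u hup).bypass.dropUntil a hwt2 := by
          simp [bypass, hwt2]
        calc (Walk.cons r p).bypass.takeUntil u hu
            = (p.bypass.dropUntil a hs).takeUntil u hu2 := takeUntil_congr eB hu hu2
          _ = (p.bypass.takeUntil u huq).dropUntil a hwt :=
              dropUntil_takeUntil_comm p.bypass p.bypass_isPath hs hxu hu2 huq hwt
          _ = (p.takeUntil u hup).bypass.dropUntil a hwt2 :=
              dropUntil_congr eIH hwt hwt2
          _ = (Walk.cons r (p.takeUntil u hup)).bypass := eB2.symm
          _ = ((Walk.cons r p).takeUntil u hu').bypass := by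
              rw [takeUntil_cons' p hxu hu' hup]
      · have eB : (Walk.cons r p).bypass = Walk.cons r p.bypass := by
          simp [bypass, hs]
        have hu2 : u ∈ (Walk.cons r p.bypass).support := eB ▸ hu
        have huq : u ∈ p.bypass.support := by
          rcases (by simpa using hu2 : u = a ∨ u ∈ p.bypass.support) with h | h
          · exact absurd h.symm hxu
          · exact h
        have hup : u ∈ p.support := p.support_bypass_subset huq
        have eIH := bypass_takeUntil p huq hup
        have hs2 : a ∉ (p.takeUntil u hup).bypass.support := by
          rw [← eIH]
          intro hcon
          exact hs (p.bypass.support_takeUntil_subset huq hcon)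
        have eB2 : (Walk.cons r (p.takeUntil u hup)).bypass
            = Walk.cons r (p.takeUntil u hup).bypass := by
          simp [bypass, hs2]
        calc (Walk.cons r p).bypass.takeUntil u hu
            = (Walk.cons r p.bypass).takeUntil u hu2 := takeUntil_congr eB hu hu2
          _ = Walk.cons r (p.bypass.takeUntil u huq) := takeUntil_cons' _ hxu hu2 huq
          _ = Walk.cons r (p.takeUntil u hup).bypass := by rw [eIH]
          _ = (Walk.cons r (p.takeUntil u hup)).bypass := eB2.symm
          _ = ((Walk.cons r p).takeUntil u hu').bypass := by
              rw [takeUntil_cons' p hxu hu' hup]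

end SimpleGraph.Walk

namespace CF

variable {V : Type} [Fintype V] [DecidableEq V]
variable {G : SimpleGraph V} {s : V} {ℓ : ℕ}
variable {μ : MeasureTheory.Measure (WalkSpace G s ℓ)} {S : Finset V} {α : ℝ}

open MeasureTheory SimpleGraph

-- ### lemmas

variable {μ : Measure (WalkSpace G s ℓ)} {S : Finset V} {α : ℝ}

/-- A dominant edge lies on every dominant path of its head. -/
lemma edge_mem_dominantPath [IsProbabilityMeasure μ] (hspec : Special μ S α)
    {a b : V} (hd : Dominant μ S α a b) {Pb : G.Walk s b}
    (hPb : IsDominantPath μ α b Pb) : s(a, b) ∈ Pb.edges := by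
  by_contra hne
  have hsub : {W : WalkSpace G s ℓ | ∃ h : Reaches W b, inducedPath W b h = Pb}
      ⊆ {W | ∃ h : Reaches W b, s(a, b) ∉ (inducedPath W b h).edges} := by
    rintro W ⟨h, hP⟩
    exact ⟨h, by rw [hP]; exact hne⟩
  have h1 : (μ {W | ∃ h : Reaches W b, inducedPath W b h = Pb}).toReal
      ≤ (μ {W | ∃ h : Reaches W b, s(a, b) ∉ (inducedPath W b h).edges}).toReal :=
    ENNReal.toReal_mono (measure_ne_top μ _) (measure_mono hsub)
  have hq : α ≤ (μ {W | Reaches W b}).toReal := hspec b hd.2.1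
  have h2 := hPb.2.1
  have h3 := hd.2.2.2.2
  linarith

/-- There is a walk inducing given dominant paths at both endpoints of a dominant edge. -/
lemma exists_good_walk [IsProbabilityMeasure μ] (hspec : Special μ S α)
    {a b : V} (hd : Dominant μ S α a b) {Pa : G.Walk s a} {Pb : G.Walk s b}
    (hPa : IsDominantPath μ α a Pa) (hPb : IsDominantPath μ α b Pb)
    (hmem : a ∈ Pb.support) :
    ∃ (W : WalkSpace G s ℓ) (ha : Reaches W a) (hb : Reaches W b),
      inducedPath W a ha = Pa ∧ inducedPath W b hb = Pb := by
  set Good2 : Set (WalkSpace G s ℓ) :=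
    {W | (∃ ha : Reaches W a, inducedPath W a ha = Pa) ∧
         (∃ hb : Reaches W b, inducedPath W b hb = Pb)} with hG2
  suffices hne : Good2.Nonempty by
    obtain ⟨W, ⟨ha, hA⟩, ⟨hb, hB⟩⟩ := hne
    exact ⟨W, ha, hb, hA, hB⟩
  by_contra hempty
  rw [Set.not_nonempty_iff_eq_empty] at hempty
  have hsub : {W : WalkSpace G s ℓ | ∃ h : Reaches W b, inducedPath W b h = Pb}
      ⊆ {W | ∃ h : Reaches W a, inducedPath W a h ≠ Pa} := by
    rintro W ⟨hb, hPb'⟩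
    have ha : Reaches W a := by
      have h1 : a ∈ (inducedPath W b hb).support := by rw [hPb']; exact hmem
      have h2 : a ∈ (W.2.1.takeUntil b hb).support :=
        (W.2.1.takeUntil b hb).support_bypass_subset h1
      exact W.2.1.support_takeUntil_subset hb h2
    refine ⟨ha, fun hcon => ?_⟩
    have : W ∈ Good2 := ⟨⟨ha, hcon⟩, ⟨hb, hPb'⟩⟩
    rw [hempty] at this
    exact this
  have h1 : (μ {W | ∃ h : Reaches W b, inducedPath W b h = Pb}).toReal
      ≤ (μ {W | ∃ h : Reaches W a, inducedPath W a h ≠ Pa}).toReal :=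
    ENNReal.toReal_mono (measure_ne_top μ _) (measure_mono hsub)
  have hq : α ≤ (μ {W | Reaches W b}).toReal := hspec b hd.2.1
  have h2 := hPb.2.1
  have h3 := hPa.2.2
  linarith

/-- The rank (dominant path length) strictly increases along a dominant edge. -/
lemma rank_lt [IsProbabilityMeasure μ] (hspec : Special μ S α)
    {a b : V} (hd : Dominant μ S α a b) {Pa : G.Walk s a} {Pb : G.Walk s b}
    (hPa : IsDominantPath μ α a Pa) (hPb : IsDominantPath μ α b Pb) :
    Pa.length < Pb.length := by
  have hedge : s(a, b) ∈ Pb.edges := edge_mem_dominantPath hspec hd hPb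
  have hmem : a ∈ Pb.support := Pb.fst_mem_support_of_mem_edges hedge
  obtain ⟨W, ha, hb, hA, hB⟩ := exists_good_walk hspec hd hPa hPb hmem
  have hab : a ≠ b := G.ne_of_adj hd.2.2.1
  subst hA; subst hB
  set w : G.Walk s W.1 := W.2.1 with hw
  have h1 : a ∈ (w.takeUntil b hb).bypass.support := hmem
  have h2 : a ∈ (w.takeUntil b hb).support :=
    (w.takeUntil b hb).support_bypass_subset h1
  have h3 : a ∈ w.support := w.support_takeUntil_subset hb h2
  have key : (w.takeUntil b hb).bypass.takeUntil a h1
      = ((w.takeUntil b hb).takeUntil a h2).bypass :=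
    Walk.bypass_takeUntil _ h1 h2
  have tt : (w.takeUntil b hb).takeUntil a h2 = w.takeUntil a h3 :=
    Walk.takeUntil_takeUntil' _ hb h2 h3
  have hPa_eq : inducedPath W a ha = (w.takeUntil b hb).bypass.takeUntil a h1 := by
    rw [key, tt]
    rfl
  rw [hPa_eq]
  exact Walk.length_takeUntil_lt' _ h1 hab


/-- Uniqueness of the out-neighbor of the start along a path. -/
lemma path_unique_out_neighbor {y z t x : V} : ∀ {q : G.Walk x t} (hq : q.IsPath)
    (h1 : s(x, y) ∈ q.edges) (h2 : s(x, z) ∈ q.edges) (hy : y ≠ x) (hz : z ≠ x), y = z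
  | Walk.nil, hq, h1, h2, hy, hz => by simp at h1
  | @Walk.cons _ _ _ b _ r q, hq, h1, h2, hy, hz => by
    have hq' := (Walk.cons_isPath_iff _ _).mp hq
    have key : ∀ c : V, s(x, c) ∈ (Walk.cons r q).edges → c ≠ x → c = b := by
      intro c hc hcx
      rw [Walk.edges_cons] at hc
      rcases List.mem_cons.mp hc with h | h
      · rcases Sym2.eq_iff.mp h with ⟨-, h⟩ | ⟨h1', h2'⟩
        · exact h
        · exact absurd h2' hcx
      · exact absurd (q.fst_mem_support_of_mem_edges h) hq'.2
    rw [key y h1 hy, key z h2 hz]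

lemma path_unique_in_neighbor {y z x v : V} {P : G.Walk x v} (hP : P.IsPath)
    (h1 : s(y, v) ∈ P.edges) (h2 : s(z, v) ∈ P.edges) (hy : y ≠ v) (hz : z ≠ v) :
    y = z := by
  have h1' : s(v, y) ∈ P.reverse.edges := by
    rw [Walk.edges_reverse, List.mem_reverse, Sym2.eq_swap]; exact h1
  have h2' : s(v, z) ∈ P.reverse.edges := by
    rw [Walk.edges_reverse, List.mem_reverse, Sym2.eq_swap]; exact h2
  exact path_unique_out_neighbor hP.reverse h1' h2' hy hz

/-- Two dominant edges into the same vertex coincide. -/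
lemma dominant_head_unique [IsProbabilityMeasure μ] (hspec : Special μ S α)
    {y z v : V} (h1 : Dominant μ S α y v) (h2 : Dominant μ S α z v) : y = z := by
  obtain ⟨P, hP⟩ := h1.2.2.2.1
  have e1 : s(y, v) ∈ P.edges := edge_mem_dominantPath hspec h1 hP
  have e2 : s(z, v) ∈ P.edges := edge_mem_dominantPath hspec h2 hP
  exact path_unique_in_neighbor hP.1 e1 e2 (G.ne_of_adj h1.2.2.1) (G.ne_of_adj h2.2.2.1)


theorem recessive_acyclic [IsProbabilityMeasure μ] (hspec : Special μ S α) :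
    ((inducedSub G ↑S).deleteEdges
      {e | ∃ u v, e = s(u, v) ∧ Recessive μ S α u v}).IsAcyclic := by
  classical
  set H := (inducedSub G ↑S).deleteEdges
      {e | ∃ u v, e = s(u, v) ∧ Recessive μ S α u v} with hH
  have hdom : ∀ {a b : V}, H.Adj a b → Dominant μ S α a b ∨ Dominant μ S α b a := by
    intro a b hab
    rw [hH, SimpleGraph.deleteEdges_adj] at hab
    obtain ⟨hadj, hnR⟩ := hab
    obtain ⟨haS, hbS, hG⟩ : a ∈ (S : Set V) ∧ b ∈ (S : Set V) ∧ G.Adj a b := hadj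
    by_contra hcon
    push_neg at hcon
    exact hnR ⟨a, b, rfl, Finset.mem_coe.mp haS, Finset.mem_coe.mp hbS, hG,
      hcon.1, hcon.2⟩
  set rank : V → ℕ := fun v => if h : Isolated μ α v then h.choose.length else 0
    with hrankdef
  have hrank_eq : ∀ {v : V} (h : Isolated μ α v), rank v = h.choose.length := by
    intro v h
    simp only [hrankdef]
    rw [dif_pos h]
  have hrank_lt : ∀ {a b : V}, Dominant μ S α a b → Isolated μ α a →
      rank a < rank b := by
    intro a b hd hia
    have hib : Isolated μ α b := hd.2.2.2.1
    rw [hrank_eq hia, hrank_eq hib]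
    exact rank_lt hspec hd hia.choose_spec hib.choose_spec
  intro x c hc
  have key : ∀ (v : V), v ∈ c.support → Isolated μ α v →
      (∀ b ∈ c.support, Isolated μ α b → rank b ≤ rank v) → False := by
    intro v hv hviso hmax
    have hc' := hc.rotate hv
    have hsub : ∀ a, a ∈ (c.rotate v hv).support → a ∈ c.support := by
      intro a ha
      rw [SimpleGraph.Walk.rotate] at ha
      rcases (SimpleGraph.Walk.mem_support_append_iff _ _).mp ha with h | h
      · exact c.support_dropUntil_subset hv h
      · exact c.support_takeUntil_subset hv h
    revert hc' hsub
    generalize c.rotate v hv = d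
    intro hc' hsub
    cases d with
    | nil => exact hc'.ne_nil rfl
    | cons r p =>
      rename_i y
      have hyv : v ≠ y := H.ne_of_adj r
      obtain ⟨hp_path, hE⟩ := (SimpleGraph.Walk.cons_isCycle_iff p r).mp hc'
      obtain ⟨z, rz, q, hq⟩ := SimpleGraph.Walk.exists_eq_cons_of_ne hyv p.reverse
      have hz_edge : s(v, z) ∈ p.edges := by
        have h0 : s(v, z) ∈ p.reverse.edges := by
          rw [hq]; exact List.mem_cons_self
        rwa [SimpleGraph.Walk.edges_reverse, List.mem_reverse] at h0
      have hyz : y ≠ z := by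
        rintro rfl
        exact hE hz_edge
      have hy_c : y ∈ c.support := hsub y (by
        rw [SimpleGraph.Walk.support_cons]
        exact List.mem_cons_of_mem _ p.start_mem_support)
      have hz_c : z ∈ c.support := hsub z (by
        rw [SimpleGraph.Walk.support_cons]
        exact List.mem_cons_of_mem _ (p.snd_mem_support_of_mem_edges hz_edge))
      rcases hdom r with hvy | hyv'
      · have h1 : rank v < rank y := hrank_lt hvy hviso
        have h2 := hmax y hy_c hvy.2.2.2.1
        omega
      · rcases hdom rz with hvz | hzv
        · have h1 : rank v < rank z := hrank_lt hvz hviso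
          have h2 := hmax z hz_c hvz.2.2.2.1
          omega
        · exact hyz (dominant_head_unique hspec hyv' hzv)
  have hex : ∃ v, v ∈ c.support ∧ Isolated μ α v := by
    cases c with
    | nil => exact absurd rfl hc.ne_nil
    | cons r p =>
      rcases hdom r with h | h
      · refine ⟨_, ?_, h.2.2.2.1⟩
        rw [SimpleGraph.Walk.support_cons]
        exact List.mem_cons_of_mem _ p.start_mem_support
      · exact ⟨x, SimpleGraph.Walk.start_mem_support _, h.2.2.2.1⟩
  obtain ⟨v0, hv0, hv0iso⟩ := hex
  set T : Finset V := c.support.toFinset.filter (fun v => Isolated μ α v) with hT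
  have hTne : T.Nonempty := ⟨v0, by
    rw [hT, Finset.mem_filter, List.mem_toFinset]
    exact ⟨hv0, hv0iso⟩⟩
  obtain ⟨v, hvT, hmax⟩ := T.exists_max_image rank hTne
  rw [hT, Finset.mem_filter, List.mem_toFinset] at hvT
  exact key v hvT.1 hvT.2 (fun b hb hbiso =>
    hmax b (by rw [hT, Finset.mem_filter, List.mem_toFinset]; exact ⟨hb, hbiso⟩))


end CF

/-- If `G_S` is `ε`-far from cycle-free, then `G_S` has more than `ε·|S|·d`
recessive edges. -/
theorem stmt4 {V : Type} [Fintype V] [DecidableEq V]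
    (G : SimpleGraph V) [DecidableRel G.Adj] (d : ℕ) (hd : 1 ≤ d)
    (hdeg : ∀ v, G.degree v ≤ d)
    (ε : ℝ) (hε0 : 0 < ε) (hε1 : ε < 1)
    (S : Finset V) (s : V) (hs : s ∈ S) (ℓ : ℕ)
    (μ : MeasureTheory.Measure (CF.WalkSpace G s ℓ)) [MeasureTheory.IsProbabilityMeasure μ]
    (α : ℝ) (hα : 0 < α) (hspec : CF.Special μ S α)
    (hfar : ∀ F : Finset (Sym2 V), ↑F ⊆ (CF.inducedSub G ↑S).edgeSet →
      ((CF.inducedSub G ↑S).deleteEdges ↑F).IsAcyclic →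
      ε * S.card * d < (F.card : ℝ)) :
    ε * S.card * d <
      (({e : Sym2 V | ∃ u v, e = s(u, v) ∧ CF.Recessive μ S α u v}.ncard : ℝ)) := by
  classical
  have hfin : {e : Sym2 V | ∃ u v, e = s(u, v) ∧ CF.Recessive μ S α u v}.Finite :=
    Set.toFinite _
  have hsub : ↑hfin.toFinset ⊆ (CF.inducedSub G ↑S).edgeSet := by
    rw [Set.Finite.coe_toFinset]
    rintro e ⟨u, v, rfl, hrec⟩
    rw [SimpleGraph.mem_edgeSet]
    exact (⟨Finset.mem_coe.mpr hrec.1, Finset.mem_coe.mpr hrec.2.1, hrec.2.2.1⟩ :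
      u ∈ (S : Set V) ∧ v ∈ (S : Set V) ∧ G.Adj u v)
  have hacyc : ((CF.inducedSub G ↑S).deleteEdges ↑hfin.toFinset).IsAcyclic := by
    rw [Set.Finite.coe_toFinset]
    exact CF.recessive_acyclic hspec
  have hbig := hfar hfin.toFinset hsub hacyc
  have hcard : ({e : Sym2 V | ∃ u v, e = s(u, v) ∧ CF.Recessive μ S α u v}.ncard : ℝ)
      = (hfin.toFinset.card : ℝ) := by
    rw [← Set.ncard_coe_finset, Set.Finite.coe_toFinset]
  rw [hcard]
  exact hbig
end

section
/- Assume s is special for S with parameter α, where α ≥ ε/(√(|S|·n)·log n), and that more than ε·|S|/2 vertices of S are blue. Let W_1,…,W_m be independent μ-random walks, where m = c·ε⁻³·√n·ℓ·log²n for a sufficiently large absolute constant c. Then with probability at least 2/3, the subgraph of G induced on the union of the vertex sets of W_1,…,W_m contains a cycle. -/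
open MeasureTheory SimpleGraph

namespace CF

variable {V : Type} [Fintype V] [DecidableEq V]

variable {G : SimpleGraph V} {s : V} {ℓ : ℕ}

section Helpers

variable {G : SimpleGraph V} {s : V} {ℓ : ℕ}

instance fintypeWalkSpace [DecidableRel G.Adj] : Fintype (WalkSpace G s ℓ) := by
  have : ∀ t : V, Fintype {w : G.Walk s t // w.length ≤ ℓ} := fun t =>
    Fintype.ofEquiv {w : G.Walk s t // w.length < ℓ + 1}
      (Equiv.subtypeEquivRight (fun w => by omega))
  exact Sigma.instFintype

lemma measSet (A : Set (WalkSpace G s ℓ)) : MeasurableSet A :=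
  MeasurableSpace.measurableSet_top

instance : MeasurableSingletonClass (WalkSpace G s ℓ) := ⟨fun _ => trivial⟩

instance {m : ℕ} : MeasurableSingletonClass (Fin m → WalkSpace G s ℓ) := by
  refine ⟨fun f => ?_⟩
  have : ({f} : Set (Fin m → WalkSpace G s ℓ)) = Set.pi Set.univ (fun i => {f i}) := by
    ext g; simp [funext_iff, Set.mem_pi]
  rw [this]
  exact MeasurableSet.univ_pi (fun i => trivial)

lemma measSetPi {m : ℕ} [DecidableRel G.Adj] (A : Set (Fin m → WalkSpace G s ℓ)) :
    MeasurableSet A := by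
  haveI : Finite (WalkSpace G s ℓ) := Finite.of_fintype _
  haveI : Finite (Fin m → WalkSpace G s ℓ) := Pi.finite
  exact (Set.toFinite A).measurableSet

lemma measure_eq_sum (μ : Measure (WalkSpace G s ℓ))
    (A : Finset (WalkSpace G s ℓ)) : μ ↑A = ∑ W ∈ A, μ {W} := by
  classical
  have h1 : (↑A : Set (WalkSpace G s ℓ)) = ⋃ W ∈ A, ({W} : Set _) := by ext x; simp
  rw [h1, measure_biUnion_finset]
  · intro a _ b _ hab
    simp only [Function.onFun, Set.disjoint_singleton_left, Set.mem_singleton_iff]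
    exact hab
  · exact fun _ _ => trivial

lemma sum_reach_le [DecidableRel G.Adj] (μ : Measure (WalkSpace G s ℓ))
    (P : Set (WalkSpace G s ℓ)) (S : Finset V) :
    ∑ w ∈ S, μ {W | W ∈ P ∧ Reaches W w} ≤ (ℓ + 1 : ℕ) * μ P := by
  classical
  have key : ∀ w, μ {W | W ∈ P ∧ Reaches W w}
      = ∑ W ∈ Finset.univ, if W ∈ P ∧ Reaches W w then μ {W} else 0 := by
    intro w
    have : {W | W ∈ P ∧ Reaches W w}
        = ↑(Finset.univ.filter (fun W => W ∈ P ∧ Reaches W w)) := by ext x; simp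
    rw [this, measure_eq_sum, Finset.sum_filter]
  calc ∑ w ∈ S, μ {W | W ∈ P ∧ Reaches W w}
      = ∑ w ∈ S, ∑ W ∈ Finset.univ, if W ∈ P ∧ Reaches W w then μ {W} else 0 :=
        Finset.sum_congr rfl (fun w _ => key w)
    _ = ∑ W ∈ Finset.univ, ∑ w ∈ S, if W ∈ P ∧ Reaches W w then μ {W} else 0 :=
        Finset.sum_comm
    _ ≤ ∑ W ∈ Finset.univ, if W ∈ P then ((ℓ + 1 : ℕ) : ENNReal) * μ {W} else 0 := by
        apply Finset.sum_le_sum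
        intro W _
        by_cases hP : W ∈ P
        · simp only [hP, true_and, if_true]
          rw [← Finset.sum_filter, Finset.sum_const]
          have hc : (S.filter (fun w => Reaches W w)).card ≤ ℓ + 1 := by
            have h1 : (S.filter (fun w => Reaches W w)) ⊆ W.2.1.support.toFinset := by
              intro w hw
              rw [Finset.mem_filter] at hw
              exact List.mem_toFinset.mpr hw.2
            calc (S.filter (fun w => Reaches W w)).card
                ≤ W.2.1.support.toFinset.card := Finset.card_le_card h1
              _ ≤ W.2.1.support.length := List.toFinset_card_le _
              _ = W.2.1.length + 1 := SimpleGraph.Walk.length_support _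
              _ ≤ ℓ + 1 := by have := W.2.2; omega
          calc (S.filter (fun w => Reaches W w)).card • μ {W}
              = ((S.filter (fun w => Reaches W w)).card : ENNReal) * μ {W} := nsmul_eq_mul _ _
            _ ≤ ((ℓ + 1 : ℕ) : ENNReal) * μ {W} := by
                gcongr
        · simp [hP]
    _ = ((ℓ + 1 : ℕ) : ENNReal) * ∑ W ∈ Finset.univ, (if W ∈ P then μ {W} else 0) := by
        rw [Finset.mul_sum]
        exact Finset.sum_congr rfl fun W _ => by split_ifs <;> simp
    _ = ((ℓ + 1 : ℕ) : ENNReal) * ∑ W ∈ Finset.univ.filter (fun W => W ∈ P), μ {W} := by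
        rw [Finset.sum_filter]
    _ = ((ℓ + 1 : ℕ) : ENNReal) * μ P := by
        rw [show (Finset.univ.filter (fun W => W ∈ P)) = P.toFinset by ext; simp,
          ← measure_eq_sum, Set.coe_toFinset]

lemma acyclic_mono {S₁ S₂ : Set V} (hsub : S₁ ⊆ S₂)
    (h : (inducedSub G S₂).IsAcyclic) : (inducedSub G S₁).IsAcyclic := by
  have hle : inducedSub G S₁ ≤ inducedSub G S₂ := fun u v hadj =>
    ⟨hsub hadj.1, hsub hadj.2.1, hadj.2.2⟩
  intro v c hc
  exact h (c.mapLe hle) (hc.mapLe hle)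

lemma acyclic_singleton (x : V) : (inducedSub G {x}).IsAcyclic := by
  intro v c hc
  cases c with
  | nil => exact hc.ne_nil rfl
  | cons hadj p =>
    obtain ⟨h1, h2, h3⟩ := hadj
    rw [Set.mem_singleton_iff] at h1 h2
    subst h1
    rw [h2] at h3
    exact G.irrefl h3

lemma support_eq_of_length_zero {u t : V} (w : G.Walk u t) (h : w.length = 0) :
    w.support = [u] := by
  cases w with
  | nil => simp
  | cons h p => simp at h

lemma card_filter_lt (m k : ℕ) (_hk : k ≤ m) :
    (Finset.univ.filter (fun i : Fin m => (i : ℕ) < k)).card = k := by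
  classical
  rw [← Finset.card_range k]
  refine Finset.card_bij' (t := Finset.range k) (fun i _ => (i : ℕ))
    (fun j hj => (⟨j, by simp only [Finset.mem_range] at hj; omega⟩ : Fin m)) ?_ ?_ ?_ ?_ <;>
    simp +contextual [Finset.mem_filter, Finset.mem_range]

lemma card_filter_ge (m k : ℕ) (hk : k ≤ m) :
    (Finset.univ.filter (fun i : Fin m => k ≤ (i : ℕ))).card = m - k := by
  classical
  have h := Finset.card_filter_add_card_filter_not
    (s := (Finset.univ : Finset (Fin m))) (p := fun i : Fin m => (i : ℕ) < k)
  rw [card_filter_lt m k hk] at h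
  simp only [not_lt, Finset.card_univ, Fintype.card_fin] at h
  omega

end Helpers

section RealEstimates

lemma real_est1 {h : ℝ} (k : ℕ) (h0 : 0 ≤ h) (h1 : h ≤ 1) (hhk : 2 ≤ h * k) :
    (1 - h) ^ k ≤ 1 / 6 := by
  have e1 : (1 - h) ^ k ≤ Real.exp (-h) ^ k := by
    apply pow_le_pow_left₀ (by linarith)
    nlinarith [Real.add_one_le_exp (-h)]
  have e2 : Real.exp (-h) ^ k = Real.exp (-(h * k)) := by
    rw [← Real.exp_nat_mul]; ring_nf
  have e3 : Real.exp (-(h * k)) ≤ Real.exp (-2) := Real.exp_le_exp.mpr (by linarith)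
  have e4 : Real.exp (-2) ≤ 1 / 6 := by
    have h6 : (6 : ℝ) ≤ Real.exp 2 := by
      have h1 : (2.7182818283 : ℝ) ^ 2 ≤ Real.exp 1 ^ 2 := by
        apply pow_le_pow_left₀ (by norm_num) Real.exp_one_gt_d9.le
      have h2 : Real.exp 1 ^ 2 = Real.exp 2 := by
        rw [← Real.exp_nat_mul]; norm_num
      nlinarith
    have hpos := Real.exp_pos 2
    have hmul : Real.exp 2 * (Real.exp 2)⁻¹ = 1 := mul_inv_cancel₀ (ne_of_gt hpos)
    have hinv : 0 ≤ (Real.exp 2)⁻¹ := by positivity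
    rw [Real.exp_neg]
    nlinarith
  linarith [e1, e2 ▸ e1, e3, e4]

lemma self_le_exp_half {x : ℝ} (hx : 0 ≤ x) : x ≤ Real.exp (x / 2) := by
  have h1 : 1 + x / 4 ≤ Real.exp (x / 4) := by
    have := Real.add_one_le_exp (x / 4); linarith
  have h2 : (1 + x / 4) ^ 2 ≤ Real.exp (x / 4) ^ 2 := by
    apply pow_le_pow_left₀ (by linarith) h1
  have h3 : Real.exp (x / 4) ^ 2 = Real.exp (x / 2) := by
    rw [← Real.exp_nat_mul]; ring_nf
  nlinarith [sq_nonneg (1 - x / 4)]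

lemma real_est2 {n : ℝ} (m k : ℕ) (hn : 16 ≤ n)
    (hml : 96 * Real.sqrt n * Real.log n ^ 2 ≤ (m : ℝ))
    (hmk : (m : ℝ) ≤ 2 * ((m - k : ℕ) : ℝ)) :
    (m : ℝ) * (1 - 1 / Real.sqrt n) ^ (m - k) ≤ 1 / 8 := by
  have hn0 : (0:ℝ) < n := by linarith
  have hsq : (4:ℝ) ≤ Real.sqrt n := by
    rw [show (4:ℝ) = Real.sqrt 16 by
      rw [show (16:ℝ) = 4 ^ 2 by norm_num, Real.sqrt_sq (by norm_num)]]
    exact Real.sqrt_le_sqrt hn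
  have hsq0 : (0:ℝ) < Real.sqrt n := by linarith
  have hlg : (2:ℝ) ≤ Real.log n := by
    rw [Real.le_log_iff_exp_le hn0]
    have h1 : (2.7182818286 : ℝ) ^ 2 ≥ Real.exp 1 ^ 2 := by
      apply pow_le_pow_left₀ (Real.exp_pos 1).le Real.exp_one_lt_d9.le
    have h2 : Real.exp 1 ^ 2 = Real.exp 2 := by rw [← Real.exp_nat_mul]; norm_num
    nlinarith
  have hq0 : (0:ℝ) ≤ 1 - 1 / Real.sqrt n := by
    have : 1 / Real.sqrt n ≤ 1 / 4 := by
      apply div_le_div_of_nonneg_left (by norm_num) (by norm_num) hsq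
    linarith
  set p : ℕ := m - k with hp
  set x : ℝ := (p : ℝ) / Real.sqrt n with hx
  have hx0 : 0 ≤ x := by positivity
  have hpm : (m : ℝ) ≤ 2 * Real.sqrt n * x := by
    have h2p : 2 * Real.sqrt n * x = 2 * (p : ℝ) := by
      rw [hx]; field_simp
    linarith
  have hxlb : 96 * Real.log n ≤ x := by
    rw [hx, le_div_iff₀ hsq0]
    have h1 : 48 * Real.sqrt n * Real.log n ^ 2 ≤ (p : ℝ) := by linarith
    nlinarith [Real.sqrt_nonneg n]
  have h2 : (1 - 1 / Real.sqrt n) ^ p ≤ Real.exp (-(1 / Real.sqrt n)) ^ p := by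
    apply pow_le_pow_left₀ hq0
    nlinarith [Real.add_one_le_exp (-(1 / Real.sqrt n))]
  have h3 : Real.exp (-(1 / Real.sqrt n)) ^ p = Real.exp (-x) := by
    rw [← Real.exp_nat_mul, hx]; congr 1; field_simp
  have h4 : (m : ℝ) * (1 - 1 / Real.sqrt n) ^ p ≤ 2 * Real.sqrt n * x * Real.exp (-x) := by
    have := mul_le_mul hpm (h3 ▸ h2) (by positivity) (by positivity)
    linarith
  have h5 : x * Real.exp (-x) ≤ Real.exp (-(x / 2)) := by
    have := mul_le_mul_of_nonneg_right (self_le_exp_half hx0) (Real.exp_pos (-x)).le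
    calc x * Real.exp (-x) ≤ Real.exp (x / 2) * Real.exp (-x) := this
      _ = Real.exp (-(x / 2)) := by rw [← Real.exp_add]; ring_nf
  have hsqn : Real.sqrt n ≤ n := by
    calc Real.sqrt n ≤ Real.sqrt (n ^ 2) := Real.sqrt_le_sqrt (by nlinarith)
      _ = n := Real.sqrt_sq hn0.le
  have h6 : Real.exp (-(x / 2)) ≤ Real.exp (-(48 * Real.log n)) :=
    Real.exp_le_exp.mpr (by linarith)
  have h7 : 2 * n * Real.exp (-(48 * Real.log n)) ≤ 2 * Real.exp (-(47 * Real.log n)) := by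
    have : n * Real.exp (-(48 * Real.log n)) = Real.exp (-(47 * Real.log n)) := by
      nth_rewrite 1 [← Real.exp_log hn0]
      rw [← Real.exp_add]; congr 1; ring
    linarith [this]
  have h8 : Real.exp (-(47 * Real.log n)) ≤ Real.exp (-94) :=
    Real.exp_le_exp.mpr (by linarith)
  have h9 : Real.exp (-94 : ℝ) ≤ 1 / 95 := by
    rw [Real.exp_neg]
    have h95 : (95:ℝ) ≤ Real.exp 94 := by
      have := Real.add_one_le_exp (94:ℝ); linarith
    have hpos := Real.exp_pos (94:ℝ)
    rw [inv_eq_one_div, div_le_div_iff₀ hpos (by norm_num)]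
    linarith
  have hexp0 : (0:ℝ) ≤ Real.exp (-(x/2)) := (Real.exp_pos _).le
  calc (m : ℝ) * (1 - 1 / Real.sqrt n) ^ p
      ≤ 2 * Real.sqrt n * (x * Real.exp (-x)) := by linarith [h4]
    _ ≤ 2 * Real.sqrt n * Real.exp (-(x / 2)) := by
        apply mul_le_mul_of_nonneg_left h5 (by positivity)
    _ ≤ 2 * n * Real.exp (-(x / 2)) := by nlinarith
    _ ≤ 2 * n * Real.exp (-(48 * Real.log n)) := by
        apply mul_le_mul_of_nonneg_left h6 (by linarith)
    _ ≤ 2 * Real.exp (-(47 * Real.log n)) := h7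
    _ ≤ 2 * Real.exp (-94) := by linarith [h8]
    _ ≤ 2 * (1 / 95) := by linarith [h9]
    _ ≤ 1 / 8 := by norm_num

end RealEstimates

end CF

set_option maxHeartbeats 1000000

/-- If `s` is special with `α ≥ ε/(√(|S|n) log n)` and more than `ε|S|/2`
vertices of `S` are blue, then `m = c·ε⁻³·√n·ℓ·log²n` independent `μ`-random walks span a
subgraph containing a cycle with probability at least `2/3` (for a sufficiently large
absolute constant `c` and sufficiently large `n`). -/
theorem stmt6 : ∃ c₀ n₀ : ℝ, 0 < c₀ ∧
    ∀ (V : Type) [Fintype V] [DecidableEq V] (G : SimpleGraph V) [DecidableRel G.Adj],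
    ∀ (d : ℕ), 1 ≤ d → (∀ v, G.degree v ≤ d) →
    n₀ ≤ (Fintype.card V : ℝ) →
    ∀ (ε : ℝ), 0 < ε → ε < 1 →
    ∀ (S : Finset V) (s : V), s ∈ S →
    ∀ (ℓ : ℕ) (μ : MeasureTheory.Measure (CF.WalkSpace G s ℓ)),
      MeasureTheory.IsProbabilityMeasure μ →
    ∀ (α : ℝ), 0 < α →
      ε / (Real.sqrt ((S.card : ℝ) * Fintype.card V) * Real.log (Fintype.card V)) ≤ α →
      CF.Special μ S α →
      ε * S.card / 2 < ({v | v ∈ S ∧ CF.Blue μ α v}.ncard : ℝ) →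
    ∀ (m : ℕ),
      c₀ * (ε⁻¹ ^ 3 * Real.sqrt (Fintype.card V) * ℓ * Real.log (Fintype.card V) ^ 2)
        ≤ (m : ℝ) →
    (2 : ℝ) / 3 ≤
      ((MeasureTheory.Measure.pi fun _ : Fin m => μ)
        {Ws | ¬ (CF.inducedSub G (⋃ i, {v | CF.Reaches (Ws i) v})).IsAcyclic}).toReal := by
  refine ⟨96, 16, by norm_num, ?_⟩
  intro V _ _ G _ d hd1 hdeg hn ε hε0 hε1 S s hsS ℓ μ hμ α hα0 hαlow hspec hblue m hm
  haveI := hμ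
  classical
  set nR : ℝ := (Fintype.card V : ℝ) with hnRdef
  clear_value nR
  have hn0 : (0:ℝ) < nR := by linarith
  have hsq4 : (4:ℝ) ≤ Real.sqrt nR := by
    rw [show (4:ℝ) = Real.sqrt 16 by
      rw [show (16:ℝ) = 4 ^ 2 by norm_num, Real.sqrt_sq (by norm_num)]]
    exact Real.sqrt_le_sqrt hn
  have hsq0 : (0:ℝ) < Real.sqrt nR := by linarith
  have hlg2 : (2:ℝ) ≤ Real.log nR := by
    rw [Real.le_log_iff_exp_le hn0]
    have h1 : Real.exp 1 ^ 2 ≤ (2.7182818286 : ℝ) ^ 2 :=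
      pow_le_pow_left₀ (Real.exp_pos 1).le Real.exp_one_lt_d9.le 2
    have h2 : Real.exp 1 ^ 2 = Real.exp 2 := by rw [← Real.exp_nat_mul]; norm_num
    nlinarith
  -- the blue set as a finset
  set Bf : Finset V := S.filter (fun v => CF.Blue μ α v) with hBfdef
  clear_value Bf
  have hBcard : ε * S.card / 2 < (Bf.card : ℝ) := by
    have he : {v | v ∈ S ∧ CF.Blue μ α v} = (↑Bf : Set V) := by
      ext v; simp [hBfdef]
    rwa [he, Set.ncard_coe_finset] at hblue
  have hS1 : (1:ℝ) ≤ (S.card : ℝ) := by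
    have : 0 < S.card := Finset.card_pos.mpr ⟨s, hsS⟩
    exact_mod_cast this
  have hBpos : 0 < Bf.card := by
    rcases Nat.eq_zero_or_pos Bf.card with h | h
    · rw [h] at hBcard; simp at hBcard; nlinarith
    · exact h
  -- ℓ ≥ 1
  have hℓ1 : 1 ≤ ℓ := by
    by_contra hl
    have hℓ0 : ℓ = 0 := by omega
    subst hℓ0
    obtain ⟨w, hwB⟩ := Finset.card_pos.mp hBpos
    have hwBlue : CF.Blue μ α w := by
      rw [hBfdef, Finset.mem_filter] at hwB; exact hwB.2
    have hsupp : ∀ (W : CF.WalkSpace G s 0) (v : V), CF.Reaches W v → v = s := by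
      intro W v hv
      have hlen : W.2.1.length = 0 := Nat.le_zero.mp W.2.2
      have hsup := CF.support_eq_of_length_zero W.2.1 hlen
      have hv' : v ∈ W.2.1.support := hv
      rw [hsup] at hv'
      simpa using hv'
    have hnoC : ∀ W W' : CF.WalkSpace G s 0, ¬ CF.FormsCycle W W' := by
      intro W W' hc
      apply hc
      apply CF.acyclic_mono (S₂ := {s}) ?_ (CF.acyclic_singleton s)
      intro v hv
      rcases hv with hv | hv
      · exact hsupp W v hv
      · exact hsupp W' v hv
    have hHe : ∀ W, ¬ CF.Heavy μ W := by
      intro W hW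
      have hemp : {W' | CF.FormsCycle W W'} = (∅ : Set _) := by
        ext W'; simp [hnoC]
      have hcy : CF.cycProb μ W = 0 := by
        unfold CF.cycProb; rw [hemp]; simp
      unfold CF.Heavy at hW
      rw [hcy] at hW
      have : 0 < 1 / Real.sqrt nR := by positivity
      rw [hnRdef] at this
      linarith
    have hq0 : CF.qH μ w = 0 := by
      unfold CF.qH
      rw [show {W | CF.Heavy μ W ∧ CF.Reaches W w} = (∅ : Set _) by ext W; simp [hHe]]
      simp
    have hB := hwBlue
    unfold CF.Blue at hB
    rw [hq0] at hB
    linarith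
  -- heavy mass lower bound
  set Hset : Set (CF.WalkSpace G s ℓ) := {W | CF.Heavy μ W} with hHsetdef
  set hH : ℝ := (μ Hset).toReal with hHdef
  clear_value hH
  have hH0 : 0 ≤ hH := by rw [hHdef]; exact ENNReal.toReal_nonneg
  have hH1 : hH ≤ 1 := by
    rw [hHdef]
    have h1 : μ Hset ≤ 1 := prob_le_one
    calc (μ Hset).toReal ≤ (1 : ENNReal).toReal := ENNReal.toReal_mono (by simp) h1
      _ = 1 := by simp
  have hsum : ∑ w ∈ S, CF.qH μ w ≤ ((ℓ:ℝ) + 1) * hH := by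
    have h1 := CF.sum_reach_le μ Hset S
    have h2 : ∀ w ∈ S, μ {W | W ∈ Hset ∧ CF.Reaches W w} ≠ ⊤ := fun _ _ => measure_ne_top μ _
    have h3 : (∑ w ∈ S, μ {W | W ∈ Hset ∧ CF.Reaches W w}).toReal
        = ∑ w ∈ S, (μ {W | W ∈ Hset ∧ CF.Reaches W w}).toReal := ENNReal.toReal_sum h2
    have h4 := ENNReal.toReal_mono
      (ENNReal.mul_ne_top (by simp) (measure_ne_top μ Hset)) h1
    rw [h3] at h4
    have h5 : (((ℓ + 1 : ℕ) : ENNReal) * μ Hset).toReal = ((ℓ:ℝ) + 1) * hH := by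
      rw [ENNReal.toReal_mul, ENNReal.toReal_natCast, hHdef]; push_cast; ring
    rw [h5] at h4
    have h6 : ∀ w, CF.qH μ w = (μ {W | W ∈ Hset ∧ CF.Reaches W w}).toReal := by
      intro w; rfl
    calc ∑ w ∈ S, CF.qH μ w
        = ∑ w ∈ S, (μ {W | W ∈ Hset ∧ CF.Reaches W w}).toReal :=
          Finset.sum_congr rfl (fun w _ => h6 w)
      _ ≤ _ := h4
  have hsum_lb : (ε * S.card / 2) * (α / 4) ≤ ∑ w ∈ S, CF.qH μ w := by
    have hqH0 : ∀ w, 0 ≤ CF.qH μ w := fun w => ENNReal.toReal_nonneg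
    have h1 : (Bf.card : ℝ) * (α / 4) ≤ ∑ w ∈ Bf, CF.qH μ w := by
      have := Finset.card_nsmul_le_sum Bf (CF.qH μ) (α / 4)
        (fun w hw => by
          rw [hBfdef, Finset.mem_filter] at hw
          exact hw.2.le)
      rwa [nsmul_eq_mul] at this
    have hBsub : Bf ⊆ S := by rw [hBfdef]; exact Finset.filter_subset _ _
    have h2 : ∑ w ∈ Bf, CF.qH μ w ≤ ∑ w ∈ S, CF.qH μ w :=
      Finset.sum_le_sum_of_subset_of_nonneg hBsub (fun w _ _ => hqH0 w)
    have h3 : (ε * S.card / 2) * (α / 4) ≤ (Bf.card : ℝ) * (α / 4) :=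
      mul_le_mul_of_nonneg_right hBcard.le (by linarith)
    linarith
  have hKey : ε * S.card * α ≤ 8 * ((ℓ:ℝ) + 1) * hH := by nlinarith [hsum, hsum_lb]
  -- α * |S| lower bound
  have hsc0 : (0:ℝ) < (S.card : ℝ) := by linarith
  have hsS1 : (1:ℝ) ≤ Real.sqrt (S.card : ℝ) := by
    rw [show (1:ℝ) = Real.sqrt 1 by simp]
    exact Real.sqrt_le_sqrt hS1
  have hsqsc : Real.sqrt (S.card:ℝ) * Real.sqrt (S.card:ℝ) = (S.card:ℝ) :=
    Real.mul_self_sqrt hsc0.le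
  have hαlow' : ε ≤ α * (Real.sqrt (S.card:ℝ) * Real.sqrt nR * Real.log nR) := by
    have hsplit : Real.sqrt ((S.card:ℝ) * nR) = Real.sqrt (S.card:ℝ) * Real.sqrt nR :=
      Real.sqrt_mul hsc0.le nR
    have hden : 0 < Real.sqrt ((S.card:ℝ) * nR) * Real.log nR := by
      rw [hsplit]; positivity
    rw [div_le_iff₀ hden] at hαlow
    rw [hsplit] at hαlow
    nlinarith [hαlow]
  have hαS : ε ≤ α * (S.card:ℝ) * (Real.sqrt nR * Real.log nR) := by
    have hstep : α * (Real.sqrt (S.card:ℝ) * Real.sqrt nR * Real.log nR) * Real.sqrt (S.card:ℝ)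
        = α * (S.card:ℝ) * (Real.sqrt nR * Real.log nR) := by
      linear_combination (α * Real.sqrt nR * Real.log nR) * hsqsc
    have hεu : ε * 1 ≤ ε * Real.sqrt (S.card:ℝ) := mul_le_mul_of_nonneg_left hsS1 hε0.le
    have hmm := mul_le_mul_of_nonneg_right hαlow' (Real.sqrt_nonneg ((S.card:ℝ)))
    rw [hstep] at hmm
    linarith
  have hε2 : ε ^ 2 ≤ 8 * ((ℓ:ℝ) + 1) * hH * (Real.sqrt nR * Real.log nR) := by
    have ha := mul_le_mul_of_nonneg_left hαS hε0.le
    have hb := mul_le_mul_of_nonneg_right hKey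
      (by positivity : (0:ℝ) ≤ Real.sqrt nR * Real.log nR)
    nlinarith [ha, hb]
  -- m bounds
  have hεinv1 : (1:ℝ) ≤ ε⁻¹ := by
    rw [show ε⁻¹ = 1 / ε from (one_div ε).symm, le_div_iff₀ hε0]
    linarith
  have hL1 : (1:ℝ) ≤ (ℓ:ℝ) := by exact_mod_cast hℓ1
  have hm' : 96 * Real.sqrt nR * (ℓ:ℝ) * Real.log nR ^ 2 ≤ (m:ℝ) * ε ^ 3 := by
    have h1 := mul_le_mul_of_nonneg_right hm (le_of_lt (pow_pos hε0 3))
    have h2 : ε⁻¹ ^ 3 * ε ^ 3 = 1 := by field_simp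
    have h3 : 96 * (ε⁻¹ ^ 3 * Real.sqrt nR * (ℓ:ℝ) * Real.log nR ^ 2) * ε ^ 3
        = 96 * Real.sqrt nR * (ℓ:ℝ) * Real.log nR ^ 2 := by
      linear_combination (96 * Real.sqrt nR * (ℓ:ℝ) * Real.log nR ^ 2) * h2
    linarith [h1, h3.symm.le, h3.le]
  have hm_big : 96 * Real.sqrt nR * Real.log nR ^ 2 ≤ (m:ℝ) := by
    have hε3 : ε ^ 3 ≤ 1 := by nlinarith
    have hmnn : (0:ℝ) ≤ (m:ℝ) := Nat.cast_nonneg m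
    have hup : (m:ℝ) * ε ^ 3 ≤ (m:ℝ) * 1 := mul_le_mul_of_nonneg_left hε3 hmnn
    have hpos : (0:ℝ) ≤ 96 * Real.sqrt nR * Real.log nR ^ 2 := by positivity
    have hLmul := mul_le_mul_of_nonneg_left hL1 hpos
    -- 96 sq lg² * 1 ≤ 96 sq lg² * L
    nlinarith [hm', hup, hLmul]
  have hm1536 : (1536:ℝ) ≤ (m:ℝ) := by
    have hlg4 : (4:ℝ) ≤ Real.log nR ^ 2 := by nlinarith
    have h16 : (16:ℝ) ≤ Real.sqrt nR * Real.log nR ^ 2 :=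
      le_trans (by norm_num) (mul_le_mul hsq4 hlg4 (by norm_num) (by linarith))
    linarith
  have hm3 : 3 ≤ m := by exact_mod_cast (by linarith : (3:ℝ) ≤ (m:ℝ))
  set k : ℕ := m / 2 with hkdef
  clear_value k
  have hkm : k ≤ m := by omega
  have hk3 : (m:ℝ) ≤ 3 * (k:ℝ) := by
    have h : m ≤ 3 * k := by omega
    exact_mod_cast h
  have hmk2 : (m:ℝ) ≤ 2 * ((m - k : ℕ):ℝ) := by
    have h : m ≤ 2 * (m - k) := by omega
    exact_mod_cast h
  -- 2 ≤ hH * k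
  have hHk : 2 ≤ hH * (k:ℝ) := by
    have h6 : 6 ≤ hH * (m:ℝ) := by
      have hE := mul_le_mul hm' hε2 (by positivity)
        (by positivity : (0:ℝ) ≤ (m:ℝ) * ε ^ 3)
      have ht0 : (0:ℝ) < 8 * ((ℓ:ℝ) + 1) * Real.sqrt nR * Real.log nR * ε ^ 3 := by positivity
      have hf1 : ((ℓ:ℝ) + 1) * ε ≤ 2 * (ℓ:ℝ) * Real.log nR := by
        have ha := mul_le_mul_of_nonneg_left hε1.le
          (by positivity : (0:ℝ) ≤ (ℓ:ℝ) + 1)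
        have hb := mul_le_mul_of_nonneg_left hlg2
          (by positivity : (0:ℝ) ≤ (ℓ:ℝ))
        nlinarith [ha, hb]
      have hmid := mul_le_mul_of_nonneg_right hf1
        (by positivity : (0:ℝ) ≤ 48 * (Real.sqrt nR * Real.log nR * ε ^ 2))
      have hstep : 6 * (8 * ((ℓ:ℝ) + 1) * Real.sqrt nR * Real.log nR * ε ^ 3)
          ≤ (hH * (m:ℝ)) * (8 * ((ℓ:ℝ) + 1) * Real.sqrt nR * Real.log nR * ε ^ 3) := by
        linarith [hE, hmid]
      exact le_of_mul_le_mul_right hstep ht0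
    have hmono := mul_le_mul_of_nonneg_left hk3 hH0
    nlinarith [h6, hmono]
  -- the product measure
  set ν : Measure (Fin m → CF.WalkSpace G s ℓ) := Measure.pi (fun _ => μ) with hνdef
  clear_value ν
  haveI hνP : IsProbabilityMeasure ν := by rw [hνdef]; infer_instance
  set Fail : Set (Fin m → CF.WalkSpace G s ℓ) :=
    {Ws | (CF.inducedSub G (⋃ i, {v | CF.Reaches (Ws i) v})).IsAcyclic} with hFail
  clear_value Fail
  have hgoal : {Ws : Fin m → CF.WalkSpace G s ℓ |
      ¬ (CF.inducedSub G (⋃ i, {v | CF.Reaches (Ws i) v})).IsAcyclic} = Failᶜ := by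
    ext Ws; simp [hFail]
  rw [hgoal]
  have hν1 : ν Fail ≤ 1 := prob_le_one
  rw [prob_compl_eq_one_sub (CF.measSetPi _), ENNReal.toReal_sub_of_le hν1 (by simp)]
  simp only [ENNReal.toReal_one]
  suffices hfail : (ν Fail).toReal ≤ 1/3 by linarith only [hfail]
  -- events
  set Q : ENNReal := ENNReal.ofReal (1 - 1/Real.sqrt nR) with hQdef
  clear_value Q
  have hq0' : (0:ℝ) ≤ 1 - 1/Real.sqrt nR := by
    have : 1 / Real.sqrt nR ≤ 1 / 4 :=
      div_le_div_of_nonneg_left (by norm_num) (by norm_num) hsq4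
    linarith
  set NC : CF.WalkSpace G s ℓ → Set (CF.WalkSpace G s ℓ) :=
    fun W => {W' | ¬ CF.FormsCycle W W'} with hNCdef
  clear_value NC
  have hQbound : ∀ W, CF.Heavy μ W → μ (NC W) ≤ Q := by
    intro W hW
    have hc : NC W = {W' | CF.FormsCycle W W'}ᶜ := by ext W'; simp [hNCdef]
    have h1 : μ (NC W) = 1 - μ {W' | CF.FormsCycle W W'} := by
      rw [hc]; exact prob_compl_eq_one_sub (CF.measSet _)
    have h2 : (μ (NC W)).toReal = 1 - CF.cycProb μ W := by
      rw [h1, ENNReal.toReal_sub_of_le prob_le_one (by simp)]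
      simp [CF.cycProb]
    have h3 : (μ (NC W)).toReal ≤ 1 - 1/Real.sqrt nR := by
      unfold CF.Heavy at hW
      rw [h2, hnRdef]
      linarith
    calc μ (NC W) = ENNReal.ofReal ((μ (NC W)).toReal) :=
        (ENNReal.ofReal_toReal (measure_ne_top μ _)).symm
      _ ≤ Q := by rw [hQdef]; exact ENNReal.ofReal_le_ofReal h3
  set Hfin : Finset (CF.WalkSpace G s ℓ) := Hset.toFinset with hHfin
  clear_value Hfin
  set I₁ : Finset (Fin m) := Finset.univ.filter (fun i : Fin m => (i:ℕ) < k) with hI₁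
  clear_value I₁
  set I₂ : Finset (Fin m) := Finset.univ.filter (fun i : Fin m => k ≤ (i:ℕ)) with hI₂
  clear_value I₂
  set A : Set (Fin m → CF.WalkSpace G s ℓ) :=
    {Ws | ∀ i : Fin m, (i:ℕ) < k → ¬ CF.Heavy μ (Ws i)} with hA
  clear_value A
  set T : Fin m → CF.WalkSpace G s ℓ → Set (Fin m → CF.WalkSpace G s ℓ) := fun i W =>
    {Ws | Ws i = W ∧ ∀ j : Fin m, k ≤ (j:ℕ) → Ws j ∈ NC W} with hT
  clear_value T
  -- inclusion
  have hincl : Fail ⊆ A ∪ ⋃ i ∈ I₁, ⋃ W ∈ Hfin, T i W := by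
    intro Ws hWs
    rw [hFail, Set.mem_setOf_eq] at hWs
    by_cases hmemA : Ws ∈ A
    · exact Or.inl hmemA
    · right
      simp only [hA, Set.mem_setOf_eq, not_forall] at hmemA
      obtain ⟨i, hik, hih⟩ := hmemA
      rw [not_not] at hih
      have hImem : i ∈ I₁ := by simp [hI₁, hik]
      have hWmem : Ws i ∈ Hfin := by
        simp only [hHfin, Set.mem_toFinset, hHsetdef, Set.mem_setOf_eq]; exact hih
      have hTmem : Ws ∈ T i (Ws i) := by
        rw [hT]
        refine ⟨rfl, ?_⟩
        intro j hjk
        simp only [hNCdef, Set.mem_setOf_eq]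
        intro hFC
        apply hFC
        apply CF.acyclic_mono ?_ hWs
        intro v hv
        rcases hv with hv | hv
        · exact Set.mem_iUnion.mpr ⟨i, hv⟩
        · exact Set.mem_iUnion.mpr ⟨j, hv⟩
      exact Set.mem_biUnion hImem (Set.mem_biUnion hWmem hTmem)
  -- measure of A
  have hνA : ν A = ENNReal.ofReal ((1 - hH)^k) := by
    have hApi : A = Set.pi Set.univ
        (fun i : Fin m => if (i:ℕ) < k then Hsetᶜ else Set.univ) := by
      ext Ws
      simp only [hA, Set.mem_setOf_eq, Set.mem_pi, Set.mem_univ, true_implies]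
      constructor
      · intro h i
        by_cases hi : (i:ℕ) < k
        · rw [if_pos hi]; exact h i hi
        · rw [if_neg hi]; trivial
      · intro h i hi
        have := h i; rw [if_pos hi] at this; exact this
    have hHc : μ Hsetᶜ = ENNReal.ofReal (1 - hH) := by
      rw [prob_compl_eq_one_sub (CF.measSet _), ENNReal.ofReal_sub 1 hH0, ENNReal.ofReal_one,
        hHdef, ENNReal.ofReal_toReal (measure_ne_top μ Hset)]
    calc ν A = ∏ i : Fin m, μ (if (i:ℕ) < k then Hsetᶜ else Set.univ) := by
          rw [hApi, hνdef, Measure.pi_pi]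
      _ = ∏ i : Fin m, (if (i:ℕ) < k then μ Hsetᶜ else 1) := by
          refine Finset.prod_congr rfl (fun i _ => ?_)
          split_ifs <;> simp
      _ = (μ Hsetᶜ) ^ k := by
          rw [Finset.prod_ite, Finset.prod_const, Finset.prod_const_one, mul_one,
            CF.card_filter_lt m k hkm]
      _ = ENNReal.ofReal ((1 - hH)^k) := by
          rw [hHc, ← ENNReal.ofReal_pow (by linarith)]
  -- measure of T i W
  have hνT : ∀ i ∈ I₁, ∀ W ∈ Hfin, ν (T i W) ≤ μ {W} * Q^(m - k) := by
    intro i hi W hW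
    have hik : (i:ℕ) < k := by
      rw [hI₁, Finset.mem_filter] at hi; exact hi.2
    have hWH : CF.Heavy μ W := by
      rw [hHfin, Set.mem_toFinset] at hW; exact hW
    set t : Fin m → Set (CF.WalkSpace G s ℓ) := fun j =>
      if j = i then {W} else if k ≤ (j:ℕ) then NC W else Set.univ with htdef
    have hsubT : T i W ⊆ Set.pi Set.univ t := by
      rw [hT]
      intro Ws hWs
      obtain ⟨h1, h2⟩ := hWs
      intro j _
      simp only [htdef]
      split_ifs with hj1 hj2
      · rw [hj1]; exact h1
      · exact h2 j hj2
      · trivial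
    have hI₂sub : I₂ ⊆ Finset.univ.erase i := by
      intro j hj
      rw [hI₂, Finset.mem_filter] at hj
      refine Finset.mem_erase.mpr ⟨?_, Finset.mem_univ j⟩
      intro hji; rw [hji] at hj; omega
    calc ν (T i W) ≤ ν (Set.pi Set.univ t) := measure_mono hsubT
      _ = ∏ j, μ (t j) := by rw [hνdef, Measure.pi_pi]
      _ = μ (t i) * ∏ j ∈ Finset.univ.erase i, μ (t j) :=
          (Finset.mul_prod_erase Finset.univ _ (Finset.mem_univ i)).symm
      _ ≤ μ {W} * Q^(m-k) := by
          have hti : t i = {W} := by simp [htdef]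
          rw [hti]
          refine mul_le_mul_right ?_ _
          rw [← Finset.prod_sdiff hI₂sub]
          have hone : ∏ j ∈ (Finset.univ.erase i) \ I₂, μ (t j) = 1 := by
            apply Finset.prod_eq_one
            intro j hj
            rw [Finset.mem_sdiff, Finset.mem_erase] at hj
            obtain ⟨⟨hji, _⟩, hjI₂⟩ := hj
            have hjk : ¬ k ≤ (j:ℕ) := by
              intro hc; exact hjI₂ (by rw [hI₂, Finset.mem_filter]; exact ⟨Finset.mem_univ j, hc⟩)
            simp only [htdef]
            rw [if_neg hji, if_neg hjk]
            simp
          have htwo : ∏ j ∈ I₂, μ (t j) ≤ Q^(m-k) := by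
            have hb : ∀ j ∈ I₂, μ (t j) ≤ Q := by
              intro j hj
              rw [hI₂, Finset.mem_filter] at hj
              have hji : j ≠ i := by intro hji; rw [hji] at hj; omega
              simp only [htdef]
              rw [if_neg hji, if_pos hj.2]
              exact hQbound W hWH
            calc ∏ j ∈ I₂, μ (t j) ≤ ∏ _j ∈ I₂, Q := Finset.prod_le_prod' hb
              _ = Q^(I₂.card) := Finset.prod_const Q
              _ = Q^(m-k) := by rw [hI₂, CF.card_filter_ge m k hkm]
          calc (∏ j ∈ (Finset.univ.erase i) \ I₂, μ (t j)) * ∏ j ∈ I₂, μ (t j)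
              = ∏ j ∈ I₂, μ (t j) := by rw [hone, one_mul]
            _ ≤ Q^(m-k) := htwo
  -- sum bound
  have hsum2 : ∑ i ∈ I₁, ∑ W ∈ Hfin, (μ {W} * Q^(m-k))
      ≤ ENNReal.ofReal ((m:ℝ) * (1 - 1/Real.sqrt nR)^(m-k)) := by
    have h1 : ∑ W ∈ Hfin, μ {W} * Q^(m-k) = μ Hset * Q^(m-k) := by
      rw [← Finset.sum_mul, ← CF.measure_eq_sum μ Hfin, hHfin, Set.coe_toFinset]
    have h2 : ∑ i ∈ I₁, ∑ W ∈ Hfin, (μ {W} * Q^(m-k)) = (I₁.card : ENNReal) * (μ Hset * Q^(m-k)) := by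
      rw [Finset.sum_congr rfl (fun i _ => h1), Finset.sum_const, nsmul_eq_mul]
    rw [h2, hI₁, CF.card_filter_lt m k hkm]
    have hQpow : Q^(m-k) = ENNReal.ofReal ((1 - 1/Real.sqrt nR)^(m-k)) := by
      rw [hQdef, ← ENNReal.ofReal_pow hq0']
    calc (k : ENNReal) * (μ Hset * Q^(m-k))
        ≤ (m : ENNReal) * (1 * Q^(m-k)) :=
          mul_le_mul' (Nat.cast_le.mpr hkm) (mul_le_mul_left prob_le_one _)
      _ = (m : ENNReal) * Q^(m-k) := by rw [one_mul]
      _ = ENNReal.ofReal (m:ℝ) * ENNReal.ofReal ((1 - 1/Real.sqrt nR)^(m-k)) := by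
          rw [hQpow, ENNReal.ofReal_natCast]
      _ = ENNReal.ofReal ((m:ℝ) * (1 - 1/Real.sqrt nR)^(m-k)) :=
          (ENNReal.ofReal_mul (Nat.cast_nonneg m)).symm
  -- combine
  have hchain : ν Fail ≤ ENNReal.ofReal ((1-hH)^k)
      + ENNReal.ofReal ((m:ℝ) * (1 - 1/Real.sqrt nR)^(m-k)) := by
    calc ν Fail ≤ ν (A ∪ ⋃ i ∈ I₁, ⋃ W ∈ Hfin, T i W) := measure_mono hincl
      _ ≤ ν A + ν (⋃ i ∈ I₁, ⋃ W ∈ Hfin, T i W) := measure_union_le _ _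
      _ ≤ ν A + ∑ i ∈ I₁, ν (⋃ W ∈ Hfin, T i W) :=
          add_le_add_right (measure_biUnion_finset_le _ _) _
      _ ≤ ν A + ∑ i ∈ I₁, ∑ W ∈ Hfin, ν (T i W) :=
          add_le_add_right (Finset.sum_le_sum (fun i _ => measure_biUnion_finset_le _ _)) _
      _ ≤ ν A + ∑ i ∈ I₁, ∑ W ∈ Hfin, (μ {W} * Q^(m-k)) :=
          add_le_add_right (Finset.sum_le_sum fun i hi =>
            Finset.sum_le_sum fun W hW => hνT i hi W hW) _
      _ ≤ _ := add_le_add hνA.le hsum2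
  have hr1 : (1 - hH)^k ≤ 1/6 := CF.real_est1 k hH0 hH1 hHk
  have hr2 : (m:ℝ) * (1 - 1/Real.sqrt nR)^(m-k) ≤ 1/8 := CF.real_est2 m k hn hm_big hmk2
  have hr0a : 0 ≤ (1 - hH)^k := pow_nonneg (by linarith) k
  have hr0b : 0 ≤ (m:ℝ) * (1 - 1/Real.sqrt nR)^(m-k) :=
    mul_nonneg (Nat.cast_nonneg m) (pow_nonneg hq0' _)
  have haux : ENNReal.ofReal ((1-hH)^k) + ENNReal.ofReal ((m:ℝ) * (1 - 1/Real.sqrt nR)^(m-k))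
      ≤ ENNReal.ofReal (1/3) := by
    rw [← ENNReal.ofReal_add hr0a hr0b]
    exact ENNReal.ofReal_le_ofReal (by linarith only [hr1, hr2])
  exact ENNReal.toReal_le_of_le_ofReal (by norm_num) (le_trans hchain haux)
end

section
/- Assume s is special for S with parameter α, and let (u,v) be a recessive edge of G_S such that neither u nor v is blue. Then Pr(E_u) ≥ α²/16 or Pr(E_v) ≥ α²/16, where the probability is over a pair of independent μ-random walks. -/
open MeasureTheory SimpleGraph

namespace CF

variable {V : Type} [Fintype V] [DecidableEq V] {G : SimpleGraph V} {s : V} {ℓ : ℕ}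

lemma countable_walkSpace [DecidableRel G.Adj] : Countable (WalkSpace G s ℓ) := by
  haveI : ∀ t, Finite {w : G.Walk s t // w.length ≤ ℓ} := fun t =>
    Finite.of_injective
      (fun w => (⟨w.1, Nat.lt_succ_of_le w.2⟩ : {w : G.Walk s t // w.length < ℓ + 1}))
      (by rintro ⟨a, _⟩ ⟨b, _⟩ h; simpa using h)
  exact inferInstanceAs (Countable (Σ t : V, {w : G.Walk s t // w.length ≤ ℓ}))

lemma measurableSet_pair [DecidableRel G.Adj]
    (A : Set (WalkSpace G s ℓ × WalkSpace G s ℓ)) : MeasurableSet A := by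
  haveI : Countable (WalkSpace G s ℓ) := countable_walkSpace
  haveI : MeasurableSingletonClass (WalkSpace G s ℓ) :=
    ⟨fun _ => MeasurableSpace.measurableSet_top⟩
  exact (Set.to_countable A).measurableSet

lemma toReal_mono_meas {X : Type*} [MeasurableSpace X] (ν : Measure X)
    [IsFiniteMeasure ν] {A B : Set X} (h : A ⊆ B) :
    (ν A).toReal ≤ (ν B).toReal :=
  ENNReal.toReal_mono (measure_ne_top ν B) (measure_mono h)

lemma toReal_diff_le {X : Type*} [MeasurableSpace X] (ν : Measure X)
    [IsFiniteMeasure ν] (A B : Set X) :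
    (ν A).toReal - (ν B).toReal ≤ (ν (A \ B)).toReal := by
  have h1 : ν A ≤ ν (A \ B) + ν B := by
    refine le_trans (measure_mono ?_) (measure_union_le _ _)
    intro x hx
    by_cases hb : x ∈ B
    · exact Or.inr hb
    · exact Or.inl ⟨hx, hb⟩
  have h2 := ENNReal.toReal_mono
    (ENNReal.add_ne_top.mpr ⟨measure_ne_top _ _, measure_ne_top _ _⟩) h1
  rw [ENNReal.toReal_add (measure_ne_top _ _) (measure_ne_top _ _)] at h2
  linarith

lemma toReal_union_le {X : Type*} [MeasurableSpace X] (ν : Measure X)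
    [IsFiniteMeasure ν] (A B : Set X) :
    (ν (A ∪ B)).toReal ≤ (ν A).toReal + (ν B).toReal := by
  have h2 := ENNReal.toReal_mono
    (ENNReal.add_ne_top.mpr ⟨measure_ne_top _ _, measure_ne_top _ _⟩)
    (measure_union_le (μ := ν) A B)
  rwa [ENNReal.toReal_add (measure_ne_top _ _) (measure_ne_top _ _)] at h2

lemma prod_toReal (μ : Measure (WalkSpace G s ℓ))
    [IsProbabilityMeasure μ] (A B : Set (WalkSpace G s ℓ)) :
    ((μ.prod μ) (A ×ˢ B)).toReal = (μ A).toReal * (μ B).toReal := by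
  rw [Measure.prod_prod, ENNReal.toReal_mul]

lemma split_reach (μ : Measure (WalkSpace G s ℓ))
    [IsProbabilityMeasure μ] (w : V) (P : G.Walk s w) :
    (μ {W | Reaches W w}).toReal ≤
      (μ {W | ∃ h : Reaches W w, inducedPath W w h = P}).toReal +
        (μ {W | ∃ h : Reaches W w, inducedPath W w h ≠ P}).toReal := by
  have hsub : {W : WalkSpace G s ℓ | Reaches W w} ⊆
      {W | ∃ h : Reaches W w, inducedPath W w h = P} ∪
        {W | ∃ h : Reaches W w, inducedPath W w h ≠ P} := by
    intro W h
    by_cases he : inducedPath W w h = P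
    · exact Or.inl ⟨h, he⟩
    · exact Or.inr ⟨h, he⟩
  exact le_trans (toReal_mono_meas μ hsub) (toReal_union_le μ _ _)

/-- Two paths to the two endpoints of an edge, both avoiding the edge, give a cycle. -/
lemma not_acyclic_aux {u v : V} (hne : u ≠ v) (Pv : G.Walk s v) (Pu : G.Walk s u)
    (h1 : s(u, v) ∉ Pv.edges) (h2 : s(u, v) ∉ Pu.edges) :
    ¬ (SimpleGraph.fromEdgeSet
        ({e | e ∈ Pv.edges} ∪ {e | e ∈ Pu.edges} ∪ {s(u, v)} : Set (Sym2 V))).IsAcyclic := by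
  intro hac
  have hadj : (SimpleGraph.fromEdgeSet
      ({e | e ∈ Pv.edges} ∪ {e | e ∈ Pu.edges} ∪ {s(u, v)} : Set (Sym2 V))).Adj u v :=
    (SimpleGraph.fromEdgeSet_adj _).mpr ⟨Or.inr rfl, hne⟩
  have hbridge := (SimpleGraph.isAcyclic_iff_forall_adj_isBridge.mp hac) hadj
  rw [SimpleGraph.isBridge_iff] at hbridge
  apply hbridge
  have hedgeset : (SimpleGraph.fromEdgeSet
        ({e | e ∈ Pv.edges} ∪ {e | e ∈ Pu.edges} ∪ {s(u, v)} : Set (Sym2 V)) \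
        SimpleGraph.fromEdgeSet {s(u, v)}).edgeSet
      = (({e | e ∈ Pv.edges} ∪ {e | e ∈ Pu.edges} ∪ {s(u, v)} : Set (Sym2 V)) \
          {e | e.IsDiag}) \ (({s(u, v)} : Set (Sym2 V)) \ {e | e.IsDiag}) := by
    rw [SimpleGraph.edgeSet_sdiff, SimpleGraph.edgeSet_fromEdgeSet,
      SimpleGraph.edgeSet_fromEdgeSet]
    rfl
  have hWv : ∀ e ∈ Pv.edges, e ∈ (SimpleGraph.fromEdgeSet
      ({e | e ∈ Pv.edges} ∪ {e | e ∈ Pu.edges} ∪ {s(u, v)} : Set (Sym2 V)) \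
      SimpleGraph.fromEdgeSet {s(u, v)}).edgeSet := by
    intro e he
    rw [hedgeset]
    refine ⟨⟨Or.inl (Or.inl he),
      G.not_isDiag_of_mem_edgeSet (Pv.edges_subset_edgeSet he)⟩, ?_⟩
    rintro ⟨hmem, -⟩
    rw [Set.mem_singleton_iff] at hmem
    exact h1 (hmem ▸ he)
  have hWu : ∀ e ∈ Pu.edges, e ∈ (SimpleGraph.fromEdgeSet
      ({e | e ∈ Pv.edges} ∪ {e | e ∈ Pu.edges} ∪ {s(u, v)} : Set (Sym2 V)) \
      SimpleGraph.fromEdgeSet {s(u, v)}).edgeSet := by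
    intro e he
    rw [hedgeset]
    refine ⟨⟨Or.inl (Or.inr he),
      G.not_isDiag_of_mem_edgeSet (Pu.edges_subset_edgeSet he)⟩, ?_⟩
    rintro ⟨hmem, -⟩
    rw [Set.mem_singleton_iff] at hmem
    exact h2 (hmem ▸ he)
  exact ⟨(Pu.transfer _ hWu).reverse.append (Pv.transfer _ hWv)⟩

/-- If `w ∈ S` is reached with probability at least `α`, is not blue and not isolated,
then `Pr(E_w) ≥ α²/16`. -/
lemma notIso_bound [DecidableRel G.Adj] (μ : Measure (WalkSpace G s ℓ))
    [IsProbabilityMeasure μ] (S : Finset V) {α : ℝ} (hα : 0 < α) (w : V)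
    (hq : α ≤ (μ {W | Reaches W w}).toReal)
    (hblue : ¬ Blue μ α w) (hniso : ¬ Isolated μ α w) :
    α ^ 2 / 16 ≤ ((μ.prod μ) {p | EventE μ S w p}).toReal := by
  have hH : (μ {W | Heavy μ W ∧ Reaches W w}).toReal ≤ α / 4 := not_lt.mp hblue
  by_cases hx : ∃ P : G.Walk s w, P.IsPath ∧
      (μ {W | Reaches W w}).toReal / 2 <
        (μ {W | ∃ h : Reaches W w, inducedPath W w h = P}).toReal
  · -- some path P carries more than half the mass, but `w` is not isolated
    obtain ⟨P, hP, hhalf⟩ := hx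
    have hne : α / 2 ≤ (μ {W | ∃ h : Reaches W w, inducedPath W w h ≠ P}).toReal := by
      by_contra hlt
      exact hniso ⟨P, hP, hhalf, not_le.mp hlt⟩
    have hsubA : {W : WalkSpace G s ℓ | ∃ h : Reaches W w, inducedPath W w h = P} \
        {W | Heavy μ W ∧ Reaches W w} ⊆
        {W | Light μ W ∧ ∃ h : Reaches W w, inducedPath W w h = P} := by
      rintro W ⟨⟨h, hip⟩, hnh⟩
      exact ⟨fun hh => hnh ⟨hh, h⟩, h, hip⟩
    have hsubB : {W : WalkSpace G s ℓ | ∃ h : Reaches W w, inducedPath W w h ≠ P} \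
        {W | Heavy μ W ∧ Reaches W w} ⊆
        {W | Light μ W ∧ ∃ h : Reaches W w, inducedPath W w h ≠ P} := by
      rintro W ⟨⟨h, hip⟩, hnh⟩
      exact ⟨fun hh => hnh ⟨hh, h⟩, h, hip⟩
    have hA : α / 4 ≤ (μ {W | Light μ W ∧ ∃ h : Reaches W w, inducedPath W w h = P}).toReal := by
      have d1 := toReal_diff_le μ {W : WalkSpace G s ℓ | ∃ h : Reaches W w, inducedPath W w h = P}
        {W | Heavy μ W ∧ Reaches W w}
      have d2 := toReal_mono_meas μ hsubA
      linarith
    have hB : α / 4 ≤ (μ {W | Light μ W ∧ ∃ h : Reaches W w, inducedPath W w h ≠ P}).toReal := by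
      have d1 := toReal_diff_le μ {W : WalkSpace G s ℓ | ∃ h : Reaches W w, inducedPath W w h ≠ P}
        {W | Heavy μ W ∧ Reaches W w}
      have d2 := toReal_mono_meas μ hsubB
      linarith
    have hsubE : ({W | Light μ W ∧ ∃ h : Reaches W w, inducedPath W w h = P} ×ˢ
        {W | Light μ W ∧ ∃ h : Reaches W w, inducedPath W w h ≠ P}) ⊆
        {p : WalkSpace G s ℓ × WalkSpace G s ℓ | EventE μ S w p} := by
      rintro ⟨W1, W2⟩ ⟨⟨hl1, h1, hip1⟩, ⟨hl2, h2, hip2⟩⟩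
      exact ⟨hl1, hl2, Or.inl ⟨h1, h2, by rw [hip1]; exact fun hc => hip2 hc.symm⟩⟩
    have hmono := toReal_mono_meas (μ.prod μ) hsubE
    rw [prod_toReal μ] at hmono
    have hmul := mul_le_mul hA hB (by linarith) (le_trans (by linarith) hA)
    nlinarith
  · -- no path carries more than half the mass
    push_neg at hx
    have hall : ∀ P : G.Walk s w,
        μ {W | ∃ h : Reaches W w, inducedPath W w h = P} ≤
          ENNReal.ofReal ((μ {W | Reaches W w}).toReal / 2) := by
      intro P
      by_cases hP : P.IsPath
      · calc μ {W | ∃ h : Reaches W w, inducedPath W w h = P}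
            = ENNReal.ofReal ((μ {W | ∃ h : Reaches W w, inducedPath W w h = P}).toReal) :=
              (ENNReal.ofReal_toReal (measure_ne_top μ _)).symm
          _ ≤ _ := ENNReal.ofReal_le_ofReal (hx P hP)
      · have hemp : {W : WalkSpace G s ℓ | ∃ h : Reaches W w, inducedPath W w h = P} = ∅ := by
          ext W
          simp only [Set.mem_setOf_eq, Set.mem_empty_iff_false, iff_false, not_exists]
          intro h heq
          exact hP (heq ▸ (W.2.1.takeUntil w h).bypass_isPath)
        rw [hemp]
        simp
    have hsubL : {W : WalkSpace G s ℓ | Reaches W w} \ {W | Heavy μ W ∧ Reaches W w} ⊆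
        {W | Light μ W ∧ Reaches W w} := by
      rintro W ⟨h, hnh⟩
      exact ⟨fun hh => hnh ⟨hh, h⟩, h⟩
    have hL : (μ {W | Reaches W w}).toReal - α / 4 ≤
        (μ {W : WalkSpace G s ℓ | Light μ W ∧ Reaches W w}).toReal := by
      have d1 := toReal_diff_le μ {W : WalkSpace G s ℓ | Reaches W w}
        {W | Heavy μ W ∧ Reaches W w}
      have d2 := toReal_mono_meas μ hsubL
      linarith
    have hSame : (μ.prod μ) {p : WalkSpace G s ℓ × WalkSpace G s ℓ |
          (Light μ p.1 ∧ Reaches p.1 w) ∧ (Light μ p.2 ∧ Reaches p.2 w) ∧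
          ∃ (h1 : Reaches p.1 w) (h2 : Reaches p.2 w),
            inducedPath p.1 w h1 = inducedPath p.2 w h2} ≤
        ENNReal.ofReal ((μ {W | Reaches W w}).toReal / 2) *
          μ {W : WalkSpace G s ℓ | Light μ W ∧ Reaches W w} := by
      rw [Measure.prod_apply (measurableSet_pair _)]
      have hle : ∀ W : WalkSpace G s ℓ,
          μ (Prod.mk W ⁻¹' {p : WalkSpace G s ℓ × WalkSpace G s ℓ |
            (Light μ p.1 ∧ Reaches p.1 w) ∧ (Light μ p.2 ∧ Reaches p.2 w) ∧
            ∃ (h1 : Reaches p.1 w) (h2 : Reaches p.2 w),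
              inducedPath p.1 w h1 = inducedPath p.2 w h2}) ≤
          ({W : WalkSpace G s ℓ | Light μ W ∧ Reaches W w}).indicator
            (fun _ => ENNReal.ofReal ((μ {W | Reaches W w}).toReal / 2)) W := by
        intro W
        by_cases hW : W ∈ {W : WalkSpace G s ℓ | Light μ W ∧ Reaches W w}
        · rw [Set.indicator_of_mem hW]
          refine le_trans (measure_mono ?_) (hall (inducedPath W w hW.2))
          rintro W2 ⟨_, _, h1, h2, heq⟩
          exact ⟨h2, heq.symm⟩
        · have hpre : Prod.mk W ⁻¹' {p : WalkSpace G s ℓ × WalkSpace G s ℓ |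
              (Light μ p.1 ∧ Reaches p.1 w) ∧ (Light μ p.2 ∧ Reaches p.2 w) ∧
              ∃ (h1 : Reaches p.1 w) (h2 : Reaches p.2 w),
                inducedPath p.1 w h1 = inducedPath p.2 w h2} = ∅ := by
            ext W2
            simp only [Set.mem_preimage, Set.mem_setOf_eq, Set.mem_empty_iff_false, iff_false]
            rintro ⟨hW1, -⟩
            exact hW hW1
          rw [hpre]
          simp
      refine le_trans (MeasureTheory.lintegral_mono hle) ?_
      rw [MeasureTheory.lintegral_indicator_const MeasurableSpace.measurableSet_top]
    have hq2 : (0:ℝ) ≤ (μ {W | Reaches W w}).toReal / 2 := by positivity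
    have hSameR : ((μ.prod μ) {p : WalkSpace G s ℓ × WalkSpace G s ℓ |
          (Light μ p.1 ∧ Reaches p.1 w) ∧ (Light μ p.2 ∧ Reaches p.2 w) ∧
          ∃ (h1 : Reaches p.1 w) (h2 : Reaches p.2 w),
            inducedPath p.1 w h1 = inducedPath p.2 w h2}).toReal ≤
        (μ {W | Reaches W w}).toReal / 2 *
          (μ {W : WalkSpace G s ℓ | Light μ W ∧ Reaches W w}).toReal := by
      calc ((μ.prod μ) _).toReal
          ≤ (ENNReal.ofReal ((μ {W | Reaches W w}).toReal / 2) *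
              μ {W : WalkSpace G s ℓ | Light μ W ∧ Reaches W w}).toReal :=
            ENNReal.toReal_mono (ENNReal.mul_ne_top ENNReal.ofReal_ne_top (measure_ne_top _ _))
              hSame
        _ = _ := by rw [ENNReal.toReal_mul, ENNReal.toReal_ofReal hq2]
    have hDsub : ({W : WalkSpace G s ℓ | Light μ W ∧ Reaches W w} ×ˢ
          {W : WalkSpace G s ℓ | Light μ W ∧ Reaches W w}) \
          {p : WalkSpace G s ℓ × WalkSpace G s ℓ |
            (Light μ p.1 ∧ Reaches p.1 w) ∧ (Light μ p.2 ∧ Reaches p.2 w) ∧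
            ∃ (h1 : Reaches p.1 w) (h2 : Reaches p.2 w),
              inducedPath p.1 w h1 = inducedPath p.2 w h2} ⊆
        {p : WalkSpace G s ℓ × WalkSpace G s ℓ | EventE μ S w p} := by
      rintro ⟨W1, W2⟩ ⟨⟨hW1, hW2⟩, hns⟩
      refine ⟨hW1.1, hW2.1, Or.inl ⟨hW1.2, hW2.2, fun heq => hns ⟨hW1, hW2, hW1.2, hW2.2, heq⟩⟩⟩
    have e1 := prod_toReal μ {W : WalkSpace G s ℓ | Light μ W ∧ Reaches W w}
      {W : WalkSpace G s ℓ | Light μ W ∧ Reaches W w}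
    have e2 := toReal_diff_le (μ.prod μ)
      ({W : WalkSpace G s ℓ | Light μ W ∧ Reaches W w} ×ˢ
        {W : WalkSpace G s ℓ | Light μ W ∧ Reaches W w})
      {p : WalkSpace G s ℓ × WalkSpace G s ℓ |
        (Light μ p.1 ∧ Reaches p.1 w) ∧ (Light μ p.2 ∧ Reaches p.2 w) ∧
        ∃ (h1 : Reaches p.1 w) (h2 : Reaches p.2 w),
          inducedPath p.1 w h1 = inducedPath p.2 w h2}
    have e3 := toReal_mono_meas (μ.prod μ) hDsub
    set x := (μ {W : WalkSpace G s ℓ | Light μ W ∧ Reaches W w}).toReal with hxdef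
    set q := (μ {W : WalkSpace G s ℓ | Reaches W w}).toReal with hqdef
    have f1 : 3 * α / 4 ≤ x := by linarith
    have f2 : α / 4 ≤ x - q / 2 := by linarith
    have hmul : (3 * α / 4) * (α / 4) ≤ x * (x - q / 2) :=
      mul_le_mul f1 f2 (by linarith) (by linarith)
    nlinarith

end CF

/-- If `(u,v)` is a recessive edge of `G_S` and neither `u` nor `v` is blue,
then `Pr(E_u) ≥ α²/16` or `Pr(E_v) ≥ α²/16` over a pair of independent `μ`-random walks. -/
theorem stmt7 {V : Type} [Fintype V] [DecidableEq V]
    (G : SimpleGraph V) [DecidableRel G.Adj] (d : ℕ) (hd : 1 ≤ d)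
    (hdeg : ∀ v, G.degree v ≤ d)
    (ε : ℝ) (hε0 : 0 < ε) (hε1 : ε < 1)
    (S : Finset V) (s : V) (hs : s ∈ S) (ℓ : ℕ)
    (μ : MeasureTheory.Measure (CF.WalkSpace G s ℓ)) [MeasureTheory.IsProbabilityMeasure μ]
    (α : ℝ) (hα : 0 < α) (hspec : CF.Special μ S α)
    (u v : V) (hrec : CF.Recessive μ S α u v)
    (hu : ¬ CF.Blue μ α u) (hv : ¬ CF.Blue μ α v) :
    α ^ 2 / 16 ≤ ((μ.prod μ) {p | CF.EventE μ S u p}).toReal ∨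
      α ^ 2 / 16 ≤ ((μ.prod μ) {p | CF.EventE μ S v p}).toReal := by
  obtain ⟨huS, hvS, hAdj, hnduv, hndvu⟩ := hrec
  by_cases hIu : CF.Isolated μ α u
  · by_cases hIv : CF.Isolated μ α v
    · -- both endpoints isolated: build a cycle out of the two dominant paths and the edge
      right
      obtain ⟨Pv, hPvPath, hPvhalf, hPvne⟩ := hIv
      obtain ⟨Pu, hPuPath, hPuhalf, hPune⟩ := hIu
      have hm1 : α / 2 ≤
          (μ {W | ∃ h : CF.Reaches W v, s(u, v) ∉ (CF.inducedPath W v h).edges}).toReal := by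
        by_contra hlt
        exact hnduv ⟨huS, hvS, hAdj, ⟨Pv, hPvPath, hPvhalf, hPvne⟩, not_le.mp hlt⟩
      have hm2 : α / 2 ≤
          (μ {W | ∃ h : CF.Reaches W u, s(v, u) ∉ (CF.inducedPath W u h).edges}).toReal := by
        by_contra hlt
        exact hndvu ⟨hvS, huS, hAdj.symm, ⟨Pu, hPuPath, hPuhalf, hPune⟩, not_le.mp hlt⟩
      -- the dominant paths avoid the edge (u,v)
      have hEv : s(u, v) ∉ Pv.edges := by
        intro he
        have hsub : {W : CF.WalkSpace G s ℓ |
              ∃ h : CF.Reaches W v, s(u, v) ∉ (CF.inducedPath W v h).edges} ⊆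
            {W | ∃ h : CF.Reaches W v, CF.inducedPath W v h ≠ Pv} := by
          rintro W ⟨h, hne⟩
          exact ⟨h, fun heq => hne (heq ▸ he)⟩
        have := CF.toReal_mono_meas μ hsub
        linarith
      have hEu' : s(v, u) ∉ Pu.edges := by
        intro he
        have hsub : {W : CF.WalkSpace G s ℓ |
              ∃ h : CF.Reaches W u, s(v, u) ∉ (CF.inducedPath W u h).edges} ⊆
            {W | ∃ h : CF.Reaches W u, CF.inducedPath W u h ≠ Pu} := by
          rintro W ⟨h, hne⟩
          exact ⟨h, fun heq => hne (heq ▸ he)⟩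
        have := CF.toReal_mono_meas μ hsub
        linarith
      have hEu : s(u, v) ∉ Pu.edges := by rw [Sym2.eq_swap]; exact hEu'
      -- mass bounds for light walks inducing the dominant paths
      have hHv : (μ {W | CF.Heavy μ W ∧ CF.Reaches W v}).toReal ≤ α / 4 := not_lt.mp hv
      have hHu : (μ {W | CF.Heavy μ W ∧ CF.Reaches W u}).toReal ≤ α / 4 := not_lt.mp hu
      have hsubA : {W : CF.WalkSpace G s ℓ | ∃ h : CF.Reaches W v, CF.inducedPath W v h = Pv} \
          {W | CF.Heavy μ W ∧ CF.Reaches W v} ⊆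
          {W | CF.Light μ W ∧ ∃ h : CF.Reaches W v, CF.inducedPath W v h = Pv} := by
        rintro W ⟨⟨h, hip⟩, hnh⟩
        exact ⟨fun hh => hnh ⟨hh, h⟩, h, hip⟩
      have hsubB : {W : CF.WalkSpace G s ℓ | ∃ h : CF.Reaches W u, CF.inducedPath W u h = Pu} \
          {W | CF.Heavy μ W ∧ CF.Reaches W u} ⊆
          {W | CF.Light μ W ∧ ∃ h : CF.Reaches W u, CF.inducedPath W u h = Pu} := by
        rintro W ⟨⟨h, hip⟩, hnh⟩
        exact ⟨fun hh => hnh ⟨hh, h⟩, h, hip⟩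
      have hA : α / 4 ≤
          (μ {W | CF.Light μ W ∧ ∃ h : CF.Reaches W v, CF.inducedPath W v h = Pv}).toReal := by
        have d0 := CF.split_reach μ v Pv
        have d1 := CF.toReal_diff_le μ
          {W : CF.WalkSpace G s ℓ | ∃ h : CF.Reaches W v, CF.inducedPath W v h = Pv}
          {W | CF.Heavy μ W ∧ CF.Reaches W v}
        have d2 := CF.toReal_mono_meas μ hsubA
        have d3 := hspec v hvS
        linarith
      have hB : α / 4 ≤
          (μ {W | CF.Light μ W ∧ ∃ h : CF.Reaches W u, CF.inducedPath W u h = Pu}).toReal := by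
        have d0 := CF.split_reach μ u Pu
        have d1 := CF.toReal_diff_le μ
          {W : CF.WalkSpace G s ℓ | ∃ h : CF.Reaches W u, CF.inducedPath W u h = Pu}
          {W | CF.Heavy μ W ∧ CF.Reaches W u}
        have d2 := CF.toReal_mono_meas μ hsubB
        have d3 := hspec u huS
        linarith
      have hsubE : ({W | CF.Light μ W ∧ ∃ h : CF.Reaches W v, CF.inducedPath W v h = Pv} ×ˢ
          {W | CF.Light μ W ∧ ∃ h : CF.Reaches W u, CF.inducedPath W u h = Pu}) ⊆
          {p : CF.WalkSpace G s ℓ × CF.WalkSpace G s ℓ | CF.EventE μ S v p} := by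
        rintro ⟨W1, W2⟩ ⟨⟨hl1, h1, hip1⟩, ⟨hl2, h2, hip2⟩⟩
        refine ⟨hl1, hl2, Or.inr ⟨u, huS, hvS, hAdj, Or.inl ⟨h1, h2, ?_⟩⟩⟩
        rw [hip1, hip2]
        exact CF.not_acyclic_aux hAdj.ne Pv Pu hEv hEu
      have hmono := CF.toReal_mono_meas (μ.prod μ) hsubE
      rw [CF.prod_toReal μ] at hmono
      have hmul := mul_le_mul hA hB (by linarith) (le_trans (by linarith) hA)
      nlinarith
    · right
      exact CF.notIso_bound μ S hα v (hspec v hvS) hv hIv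
  · left
    exact CF.notIso_bound μ S hα u (hspec u huS) hu hIu
end

section
/- Assume s is special for S with parameter α, the induced subgraph G_S is ε-far from cycle-free (every set of edges of G_S whose removal makes G_S a forest has more than ε·|S|·d elements), and fewer than ε·|S|/2 vertices of S are blue. Then for a pair of independent μ-random walks, Pr(E) ≥ ε·|S|·α²/(64·(ℓ+1)), where E is the union of the events E_w over w ∈ S. -/
open MeasureTheory SimpleGraph

section Aux

open CF MeasureTheory SimpleGraph Walk
open scoped Classical

variable {V : Type} [Fintype V] [DecidableEq V] {G : SimpleGraph V} {s : V} {ℓ : ℕ}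

noncomputable instance : Fintype (CF.WalkSpace G s ℓ) := by
  classical
  haveI : DecidableRel G.Adj := Classical.decRel _
  haveI : G.LocallyFinite := fun v => by infer_instance
  haveI : ∀ t : V, Fintype {w : G.Walk s t // w.length ≤ ℓ} := by
    intro t
    exact Fintype.ofEquiv {w : G.Walk s t // w.length < ℓ + 1}
      (Equiv.subtypeEquivRight (by intro w; omega))
  exact Sigma.instFintype

lemma measurableSet_all (A : Set (CF.WalkSpace G s ℓ)) : MeasurableSet A :=
  MeasurableSpace.measurableSet_top

instance : MeasurableSingletonClass (CF.WalkSpace G s ℓ × CF.WalkSpace G s ℓ) := by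
  constructor
  intro p
  have : ({p} : Set (CF.WalkSpace G s ℓ × CF.WalkSpace G s ℓ)) = {p.1} ×ˢ {p.2} := by
    ext q; simp [Prod.ext_iff]
  rw [this]
  exact (measurableSet_all _).prod (measurableSet_all _)

lemma measurableSet_all2 (A : Set (CF.WalkSpace G s ℓ × CF.WalkSpace G s ℓ)) :
    MeasurableSet A :=
  (Set.toFinite A).measurableSet

section WalkLemmas

variable {W' : Type} -- dummy

lemma isPath_loop_eq_nil {v : V} (p : G.Walk v v) (hp : p.IsPath) : p = Walk.nil := by
  cases p with
  | nil => rfl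
  | cons h q =>
    rw [Walk.cons_isPath_iff] at hp
    exact absurd (Walk.end_mem_support q) hp.2

lemma endpoint_edge_unique {x v : V} (p : G.Walk x v) (hp : p.IsPath) {a b : V}
    (ha : s(a, v) ∈ p.edges) (hb : s(b, v) ∈ p.edges) : a = b := by
  induction p with
  | nil => simp at ha
  | @cons x y z h q ih =>
    rw [Walk.cons_isPath_iff] at hp
    have hvx : z ≠ x := by
      rintro rfl
      exact hp.2 (Walk.end_mem_support q)
    simp only [Walk.edges_cons, List.mem_cons] at ha hb
    have hedge : ∀ c : V, s(c, z) = s(x, y) → y = z ∧ c = x := by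
      intro c hc
      rw [Sym2.eq_iff] at hc
      rcases hc with ⟨rfl, rfl⟩ | ⟨rfl, h2⟩
      · exact ⟨rfl, rfl⟩
      · exact absurd h2 hvx
    rcases ha with ha | ha
    · obtain ⟨rfl, rfl⟩ := hedge a ha
      rcases hb with hb | hb
      · exact ((hedge b hb).2).symm
      · rw [isPath_loop_eq_nil q hp.1] at hb
        simp at hb
    · rcases hb with hb | hb
      · obtain ⟨rfl, rfl⟩ := hedge b hb
        rw [isPath_loop_eq_nil q hp.1] at ha
        simp at ha
      · exact ih hp.1 ha hb

/-- Decompose a walk with an edge into the vertex `u` as ending with that edge. -/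
lemma path_concat_decomp {v u : V} (p : G.Walk s v) (hp : p.IsPath) {huv : u ≠ v}
    (he : s(u, v) ∈ p.edges) :
    ∃ (q : G.Walk s u) (h : G.Adj u v), p = q.concat h ∧ q.IsPath ∧
      q.edges = p.edges.dropLast ∧ p.length = q.length + 1 := by
  cases p with
  | nil => simp at he
  | @cons x y z h q =>
    obtain ⟨a, r, h', hr⟩ := Walk.exists_cons_eq_concat h q
    have hedge : s(a, v) ∈ (Walk.cons h q).edges := by
      rw [hr]
      simp [Walk.edges_concat]
    have hau : a = u := endpoint_edge_unique _ hp hedge he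
    subst hau
    refine ⟨r, h', hr, ?_, ?_, ?_⟩
    · rw [hr] at hp
      rw [Walk.concat_eq_append] at hp
      exact hp.of_append_left
    · rw [hr, Walk.edges_concat]
      simp
    · rw [hr, Walk.length_concat]

lemma not_isAcyclic_of_two_paths {H : SimpleGraph V} {a b : V} {p q : H.Walk a b}
    (hp : p.IsPath) (hq : q.IsPath) (hpq : p ≠ q) : ¬H.IsAcyclic := by
  intro hac
  exact hpq (congrArg Subtype.val (hac.path_unique ⟨p, hp⟩ ⟨q, hq⟩))

end WalkLemmas

section MeasureLemmas

variable (μ : Measure (CF.WalkSpace G s ℓ)) [IsProbabilityMeasure μ]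

lemma pr_mono {A B : Set (CF.WalkSpace G s ℓ)} (h : A ⊆ B) :
    (μ A).toReal ≤ (μ B).toReal :=
  ENNReal.toReal_mono (measure_ne_top μ B) (measure_mono h)

lemma pr_le_add {A B C : Set (CF.WalkSpace G s ℓ)} (h : A ⊆ B ∪ C) :
    (μ A).toReal ≤ (μ B).toReal + (μ C).toReal := by
  have h1 : μ A ≤ μ B + μ C := le_trans (measure_mono h) (measure_union_le B C)
  have h2 := ENNReal.toReal_mono
    (ENNReal.add_ne_top.mpr ⟨measure_ne_top μ B, measure_ne_top μ C⟩) h1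
  rwa [ENNReal.toReal_add (measure_ne_top μ B) (measure_ne_top μ C)] at h2

lemma pr_biUnion {β : Type} (t : Finset β) (f : β → Set (CF.WalkSpace G s ℓ))
    (hd : (t : Set β).PairwiseDisjoint f) :
    (μ (⋃ b ∈ t, f b)).toReal = ∑ b ∈ t, (μ (f b)).toReal := by
  rw [measure_biUnion_finset hd (fun b _ => measurableSet_all _)]
  exact ENNReal.toReal_sum (fun b _ => measure_ne_top μ _)

lemma pr2_rect (A B : Set (CF.WalkSpace G s ℓ)) :
    ((μ.prod μ) (A ×ˢ B)).toReal = (μ A).toReal * (μ B).toReal := by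
  rw [Measure.prod_prod, ENNReal.toReal_mul]

lemma pr2_rect_le {A B : Set (CF.WalkSpace G s ℓ)}
    {E : Set (CF.WalkSpace G s ℓ × CF.WalkSpace G s ℓ)} (h : A ×ˢ B ⊆ E) :
    (μ A).toReal * (μ B).toReal ≤ ((μ.prod μ) E).toReal := by
  rw [← pr2_rect μ A B]
  exact ENNReal.toReal_mono (measure_ne_top _ _) (measure_mono h)

lemma light_lb {α : ℝ} {w : V} (hnb : ¬ CF.Blue μ α w) (X : Set (CF.WalkSpace G s ℓ))
    (hX : X ⊆ {W | CF.Reaches W w}) :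
    (μ X).toReal - α / 4 ≤ (μ (X ∩ {W | CF.Light μ W})).toReal := by
  have hsub : X ⊆ (X ∩ {W | CF.Light μ W}) ∪ {W | CF.Heavy μ W ∧ CF.Reaches W w} := by
    intro W hW
    by_cases hL : CF.Light μ W
    · exact Or.inl ⟨hW, hL⟩
    · exact Or.inr ⟨not_not.mp hL, hX hW⟩
  have h1 := pr_le_add μ hsub
  have h2 : CF.qH μ w ≤ α / 4 := not_lt.mp hnb
  simp only [CF.qH] at h2
  linarith

end MeasureLemmas

lemma exists_subset_sum {β : Type} {c : ℝ} (hc : 0 < c) :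
    ∀ (F : Finset β) (m : β → ℝ), (∀ b ∈ F, 0 ≤ m b) → (∀ b ∈ F, m b < c) →
      c ≤ ∑ b ∈ F, m b → ∃ t ⊆ F, c ≤ ∑ b ∈ t, m b ∧ ∑ b ∈ t, m b < 2 * c := by
  intro F
  induction F using Finset.strongInduction with
  | _ F ih =>
    intro m h0 hlt hL
    have hne : F.Nonempty := by
      by_contra h
      rw [Finset.not_nonempty_iff_eq_empty] at h
      subst h; simp at hL; linarith
    obtain ⟨x, hx⟩ := hne
    by_cases hrest : c ≤ ∑ b ∈ F.erase x, m b
    · obtain ⟨t, ht, h1, h2⟩ := ih (F.erase x) (Finset.erase_ssubset hx) m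
        (fun b hb => h0 b (Finset.mem_of_mem_erase hb))
        (fun b hb => hlt b (Finset.mem_of_mem_erase hb)) hrest
      exact ⟨t, ht.trans (Finset.erase_subset _ _), h1, h2⟩
    · refine ⟨F, le_refl _, hL, ?_⟩
      push_neg at hrest
      have he : ∑ b ∈ F, m b = m x + ∑ b ∈ F.erase x, m b := (Finset.add_sum_erase F m hx).symm
      have := hlt x hx
      rw [he]
      linarith

section Claim1

variable (μ : Measure (CF.WalkSpace G s ℓ)) [IsProbabilityMeasure μ]

lemma pr_add_le_of_disjoint {A B C : Set (CF.WalkSpace G s ℓ)} (hd : Disjoint A B)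
    (h : A ∪ B ⊆ C) : (μ A).toReal + (μ B).toReal ≤ (μ C).toReal := by
  have h1 : μ A + μ B = μ (A ∪ B) := (measure_union hd (measurableSet_all B)).symm
  have h2 : μ (A ∪ B) ≤ μ C := measure_mono h
  have h3 := ENNReal.toReal_mono (measure_ne_top μ C) (h1 ▸ h2)
  rwa [ENNReal.toReal_add (measure_ne_top μ A) (measure_ne_top μ B)] at h3

lemma isolated_or_event (S : Finset V) {α : ℝ} (hα : 0 < α)
    {w : V} (hq : α ≤ (μ {W | CF.Reaches W w}).toReal)
    (hnb : ¬ CF.Blue μ α w) :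
    CF.Isolated μ α w ∨
      α ^ 2 / 16 ≤ ((μ.prod μ) {p | CF.EventE μ S w p}).toReal := by
  set q : ℝ := (μ {W | CF.Reaches W w}).toReal with hqdef
  set AP : G.Walk s w → Set (CF.WalkSpace G s ℓ) := fun P =>
    {W | CF.Light μ W ∧ ∃ h : CF.Reaches W w, CF.inducedPath W w h = P} with hAP
  set PP : Finset (G.Walk s w) := Finset.image
    (fun W : {W : CF.WalkSpace G s ℓ // CF.Reaches W w} => CF.inducedPath W.1 w W.2)
    Finset.univ with hPP
  have hmemP : ∀ (W : CF.WalkSpace G s ℓ) (h : CF.Reaches W w),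
      CF.inducedPath W w h ∈ PP := fun W h =>
    Finset.mem_image.mpr ⟨⟨W, h⟩, Finset.mem_univ _, rfl⟩
  have hpath : ∀ P ∈ PP, (P : G.Walk s w).IsPath := by
    intro P hP
    obtain ⟨W, -, rfl⟩ := Finset.mem_image.mp hP
    exact Walk.bypass_isPath _
  have hdisj : ∀ (U : Finset (G.Walk s w)),
      (↑U : Set (G.Walk s w)).PairwiseDisjoint AP := by
    intro U P _ P' _ hne
    refine Set.disjoint_left.mpr ?_
    rintro W ⟨-, h1, rfl⟩ ⟨-, h2, hP'⟩
    exact hne ((rfl : CF.inducedPath W w h1 = CF.inducedPath W w h2).trans hP')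
  have hunionA : ∀ (FF : Finset (G.Walk s w)), (⋃ P ∈ FF, AP P) =
      {W | CF.Light μ W ∧ ∃ h : CF.Reaches W w, CF.inducedPath W w h ∈ FF} := by
    intro FF
    ext W
    simp only [Set.mem_iUnion, Set.mem_setOf_eq, hAP]
    constructor
    · rintro ⟨P, hP, hl, h, rfl⟩
      exact ⟨hl, h, hP⟩
    · rintro ⟨hl, h, hmem⟩
      exact ⟨_, hmem, hl, h, rfl⟩
  have hunionB : ∀ (FF : Finset (G.Walk s w)), (⋃ P ∈ PP \ FF, AP P) =
      {W | CF.Light μ W ∧ ∃ h : CF.Reaches W w, CF.inducedPath W w h ∉ FF} := by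
    intro FF
    ext W
    simp only [Set.mem_iUnion, Set.mem_setOf_eq, hAP, Finset.mem_sdiff]
    constructor
    · rintro ⟨P, ⟨-, hP⟩, hl, h, rfl⟩
      exact ⟨hl, h, hP⟩
    · rintro ⟨hl, h, hmem⟩
      exact ⟨_, ⟨hmemP W h, hmem⟩, hl, h, rfl⟩
  set L : ℝ := ∑ P ∈ PP, (μ (AP P)).toReal with hLdef
  have hLeq : (μ (⋃ P ∈ PP, AP P)).toReal = L := pr_biUnion μ PP AP (hdisj PP)
  have hLset : (⋃ P ∈ PP, AP P) =
      {W | CF.Reaches W w} ∩ {W | CF.Light μ W} := by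
    rw [hunionA]
    ext W
    simp only [Set.mem_setOf_eq, Set.mem_inter_iff, hAP]
    constructor
    · rintro ⟨hl, h, -⟩
      exact ⟨h, hl⟩
    · rintro ⟨h, hl⟩
      exact ⟨hl, h, hmemP W h⟩
  have hLq : q - α / 4 ≤ L := by
    have := light_lb μ hnb {W | CF.Reaches W w} (fun W hW => hW)
    rw [← hLeq, hLset]
    exact this
  have hL34 : 3 * α / 4 ≤ L := by linarith
  by_cases hbig : ∃ P₀ ∈ PP, L - α / 4 < (μ (AP P₀)).toReal
  · left
    obtain ⟨P₀, hP₀mem, hP₀⟩ := hbig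
    refine ⟨P₀, hpath P₀ hP₀mem, ?_, ?_⟩
    · have hsub : AP P₀ ⊆ {W | ∃ h : CF.Reaches W w, CF.inducedPath W w h = P₀} :=
        fun W hW => hW.2
      have := pr_mono μ hsub
      have : q - α / 2 < (μ {W | ∃ h : CF.Reaches W w, CF.inducedPath W w h = P₀}).toReal := by
        linarith
      linarith
    · have hdisj2 : Disjoint {W : CF.WalkSpace G s ℓ | ∃ h : CF.Reaches W w, CF.inducedPath W w h = P₀}
          {W | ∃ h : CF.Reaches W w, CF.inducedPath W w h ≠ P₀} := by
        refine Set.disjoint_left.mpr ?_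
        rintro W ⟨h1, rfl⟩ ⟨h2, hne⟩
        exact hne rfl
      have hsub2 : {W : CF.WalkSpace G s ℓ | ∃ h : CF.Reaches W w, CF.inducedPath W w h = P₀} ∪
          {W | ∃ h : CF.Reaches W w, CF.inducedPath W w h ≠ P₀} ⊆ {W | CF.Reaches W w} := by
        rintro W (⟨h, -⟩ | ⟨h, -⟩) <;> exact h
      have hadd := pr_add_le_of_disjoint μ hdisj2 hsub2
      have hm : L - α / 4 <
          (μ {W | ∃ h : CF.Reaches W w, CF.inducedPath W w h = P₀}).toReal := by
        have hsub : AP P₀ ⊆ {W | ∃ h : CF.Reaches W w, CF.inducedPath W w h = P₀} :=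
          fun W hW => hW.2
        have := pr_mono μ hsub
        linarith
      linarith
  · right
    push_neg at hbig
    -- find FF ⊆ PP with α/4 ≤ ∑_{FF} and α/4 ≤ L - ∑_{FF}
    have hFF : ∃ FF ⊆ PP, α / 4 ≤ ∑ P ∈ FF, (μ (AP P)).toReal ∧
        α / 4 ≤ L - ∑ P ∈ FF, (μ (AP P)).toReal := by
      by_cases hstar : ∃ P' ∈ PP, α / 4 ≤ (μ (AP P')).toReal
      · obtain ⟨P', hP'mem, hP'⟩ := hstar
        refine ⟨{P'}, Finset.singleton_subset_iff.mpr hP'mem, ?_, ?_⟩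
        · simpa using hP'
        · have := hbig P' hP'mem
          simp only [Finset.sum_singleton]
          linarith
      · push_neg at hstar
        obtain ⟨t, ht, h1, h2⟩ := exists_subset_sum (by linarith : (0:ℝ) < α / 4) PP
          (fun P => (μ (AP P)).toReal) (fun P _ => ENNReal.toReal_nonneg)
          (fun P hP => hstar P hP) (by linarith)
        exact ⟨t, ht, h1, by linarith⟩
    obtain ⟨FF, hFFsub, hFF1, hFF2⟩ := hFF
    set A : Set (CF.WalkSpace G s ℓ) :=
      {W | CF.Light μ W ∧ ∃ h : CF.Reaches W w, CF.inducedPath W w h ∈ FF} with hAdef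
    set B : Set (CF.WalkSpace G s ℓ) :=
      {W | CF.Light μ W ∧ ∃ h : CF.Reaches W w, CF.inducedPath W w h ∉ FF} with hBdef
    have hprA : α / 4 ≤ (μ A).toReal := by
      rw [hAdef, ← hunionA FF, pr_biUnion μ FF AP (hdisj FF)]
      exact hFF1
    have hprB : α / 4 ≤ (μ B).toReal := by
      rw [hBdef, ← hunionB FF, pr_biUnion μ (PP \ FF) AP (hdisj _)]
      have hsplit : ∑ P ∈ PP \ FF, (μ (AP P)).toReal =
          L - ∑ P ∈ FF, (μ (AP P)).toReal := by
        rw [hLdef, ← Finset.sum_sdiff hFFsub]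
        ring
      rw [hsplit]
      exact hFF2
    have hrect : A ×ˢ B ⊆ {p | CF.EventE μ S w p} := by
      rintro ⟨W1, W2⟩ ⟨⟨hl1, h1, hin⟩, ⟨hl2, h2, hout⟩⟩
      refine ⟨hl1, hl2, Or.inl ⟨h1, h2, ?_⟩⟩
      intro heq
      exact hout (heq ▸ hin)
    have := pr2_rect_le μ hrect
    have hmul : α ^ 2 / 16 ≤ (μ A).toReal * (μ B).toReal := by
      have : α / 4 * (α / 4) ≤ (μ A).toReal * (μ B).toReal :=
        mul_le_mul hprA hprB (by linarith) ENNReal.toReal_nonneg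
      nlinarith
    linarith

end Claim1

section Dominant

lemma walk_transfer_self {a b : V} (p : G.Walk a b) (h : ∀ e ∈ p.edges, e ∈ G.edgeSet) :
    p.transfer G h = p := by
  induction p with
  | nil => rfl
  | cons hadj q ih => simp [Walk.transfer, ih]

lemma transfer_inj {H : SimpleGraph V} (hle : H ≤ G) {a b : V} {r r' : G.Walk a b}
    {hr : ∀ e ∈ r.edges, e ∈ H.edgeSet} {hr' : ∀ e ∈ r'.edges, e ∈ H.edgeSet}
    (he : r.transfer H hr = r'.transfer H hr') : r = r' := by
  have hG : ∀ (z : H.Walk a b), ∀ e ∈ z.edges, e ∈ G.edgeSet := fun z e hez =>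
    SimpleGraph.edgeSet_mono hle (z.edges_subset_edgeSet hez)
  have hc := congrArg (fun z : H.Walk a b => z.transfer G (hG z)) he
  simpa only [Walk.transfer_transfer, walk_transfer_self] using hc

variable (μ : Measure (CF.WalkSpace G s ℓ)) [IsProbabilityMeasure μ]

lemma dominantPath_unique {α : ℝ} {v : V} {P P' : G.Walk s v}
    (h1 : CF.IsDominantPath μ α v P) (h2 : CF.IsDominantPath μ α v P') : P = P' := by
  by_contra hne
  have hd : Disjoint {W : CF.WalkSpace G s ℓ | ∃ h : CF.Reaches W v, CF.inducedPath W v h = P}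
      {W | ∃ h : CF.Reaches W v, CF.inducedPath W v h = P'} := by
    refine Set.disjoint_left.mpr ?_
    rintro W ⟨h, rfl⟩ ⟨h', hP'⟩
    exact hne ((rfl : CF.inducedPath W v h = CF.inducedPath W v h').trans hP')
  have hsub : {W : CF.WalkSpace G s ℓ | ∃ h : CF.Reaches W v, CF.inducedPath W v h = P} ∪
      {W | ∃ h : CF.Reaches W v, CF.inducedPath W v h = P'} ⊆ {W | CF.Reaches W v} := by
    rintro W (⟨h, -⟩ | ⟨h, -⟩) <;> exact h
  have hadd := pr_add_le_of_disjoint μ hd hsub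
  obtain ⟨-, hm1, -⟩ := h1
  obtain ⟨-, hm2, -⟩ := h2
  linarith

lemma dominant_edge_mem {α : ℝ} (hα : 0 < α) {u v : V}
    (hq : α ≤ (μ {W | CF.Reaches W v}).toReal)
    {P : G.Walk s v} (hP : CF.IsDominantPath μ α v P)
    (hdom : (μ {W | ∃ h : CF.Reaches W v,
      s(u, v) ∉ (CF.inducedPath W v h).edges}).toReal < α / 2) :
    s(u, v) ∈ P.edges := by
  by_contra hmem
  have hsub : {W : CF.WalkSpace G s ℓ | ∃ h : CF.Reaches W v, CF.inducedPath W v h = P} ⊆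
      {W | ∃ h : CF.Reaches W v, s(u, v) ∉ (CF.inducedPath W v h).edges} := by
    rintro W ⟨h, heq⟩
    exact ⟨h, by rw [heq]; exact hmem⟩
  have := pr_mono μ hsub
  obtain ⟨-, hm, -⟩ := hP
  linarith

/-- If both directions of an edge `(u,w)` of `G_S` are non-dominant although both endpoints
are isolated and non-blue, then `E_w` has probability at least `α²/16`. -/
lemma recessive_event (S : Finset V) {α : ℝ} (hα : 0 < α) {u w : V}
    (hu : u ∈ S) (hw : w ∈ S) (hadj : G.Adj u w)
    (hqw : α ≤ (μ {W | CF.Reaches W w}).toReal)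
    (hqu : α ≤ (μ {W | CF.Reaches W u}).toReal)
    (hnbw : ¬ CF.Blue μ α w) (hnbu : ¬ CF.Blue μ α u)
    (hIw : CF.Isolated μ α w) (hIu : CF.Isolated μ α u)
    (hndw : ¬ CF.Dominant μ S α u w) (hndu : ¬ CF.Dominant μ S α w u) :
    α ^ 2 / 16 ≤ ((μ.prod μ) {p | CF.EventE μ S w p}).toReal := by
  have hbadw : α / 2 ≤ (μ {W | ∃ h : CF.Reaches W w,
      s(u, w) ∉ (CF.inducedPath W w h).edges}).toReal := by
    by_contra hcon
    exact hndw ⟨hu, hw, hadj, hIw, not_le.mp hcon⟩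
  have hbadu : α / 2 ≤ (μ {W | ∃ h : CF.Reaches W u,
      s(w, u) ∉ (CF.inducedPath W u h).edges}).toReal := by
    by_contra hcon
    exact hndu ⟨hw, hu, hadj.symm, hIu, not_le.mp hcon⟩
  set A : Set (CF.WalkSpace G s ℓ) := {W | ∃ h : CF.Reaches W w,
      s(u, w) ∉ (CF.inducedPath W w h).edges} ∩ {W | CF.Light μ W} with hAdef
  set B : Set (CF.WalkSpace G s ℓ) := {W | ∃ h : CF.Reaches W u,
      s(w, u) ∉ (CF.inducedPath W u h).edges} ∩ {W | CF.Light μ W} with hBdef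
  have hprA : α / 4 ≤ (μ A).toReal := by
    have := light_lb μ hnbw {W | ∃ h : CF.Reaches W w,
      s(u, w) ∉ (CF.inducedPath W w h).edges} (by rintro W ⟨h, -⟩; exact h)
    linarith
  have hprB : α / 4 ≤ (μ B).toReal := by
    have := light_lb μ hnbu {W | ∃ h : CF.Reaches W u,
      s(w, u) ∉ (CF.inducedPath W u h).edges} (by rintro W ⟨h, -⟩; exact h)
    linarith
  have hrect : A ×ˢ B ⊆ {p | CF.EventE μ S w p} := by
    rintro ⟨W1, W2⟩ ⟨⟨⟨h1, hne1⟩, hl1⟩, ⟨⟨h2, hne2⟩, hl2⟩⟩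
    refine ⟨hl1, hl2, Or.inr ⟨u, hu, hw, hadj, Or.inl ⟨h1, h2, ?_⟩⟩⟩
    set ES : Set (Sym2 V) := {e | e ∈ (CF.inducedPath W1 w h1).edges} ∪
      {e | e ∈ (CF.inducedPath W2 u h2).edges} ∪ {s(u, w)} with hESdef
    set H : SimpleGraph V := SimpleGraph.fromEdgeSet ES with hHdef
    intro hac
    have hadjH : H.Adj u w := by
      rw [hHdef, fromEdgeSet_adj]
      exact ⟨Or.inr rfl, hadj.ne⟩
    have hmemES : ∀ {a b : V} (p : G.Walk a b),
        (∀ e ∈ p.edges, e ∈ ES) → ∀ e ∈ p.edges, e ∈ H.edgeSet := by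
      intro a b p hp e hep
      rw [hHdef, edgeSet_fromEdgeSet]
      exact ⟨hp e hep, fun hdiag => G.not_isDiag_of_mem_edgeSet (p.edges_subset_edgeSet hep) hdiag⟩
    have h1e : ∀ e ∈ (CF.inducedPath W1 w h1).edges, e ∈ H.edgeSet :=
      hmemES _ (fun e he => Or.inl (Or.inl he))
    have h2e : ∀ e ∈ (CF.inducedPath W2 u h2).edges, e ∈ H.edgeSet :=
      hmemES _ (fun e he => Or.inl (Or.inr he))
    set p1 : H.Walk u w := Walk.cons hadjH Walk.nil with hp1def
    have hp1path : p1.IsPath := by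
      rw [hp1def]
      exact (SimpleGraph.Path.singleton hadjH).2
    set p2 : H.Walk u w := ((((CF.inducedPath W2 u h2).transfer H h2e).reverse).append
      (((CF.inducedPath W1 w h1)).transfer H h1e)).bypass with hp2def
    have hp2path : p2.IsPath := Walk.bypass_isPath _
    have hne : p1 ≠ p2 := by
      intro heq
      have hm : s(u, w) ∈ p1.edges := by rw [hp1def]; simp
      rw [heq] at hm
      have hm2 := Walk.edges_bypass_subset _ hm
      rw [Walk.edges_append, Walk.edges_reverse] at hm2
      rcases List.mem_append.mp hm2 with hmm | hmm
      · have := List.mem_reverse.mp hmm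
        rw [Walk.edges_transfer] at this
        exact hne2 (by rwa [Sym2.eq_swap] at this)
      · rw [Walk.edges_transfer] at hmm
        exact hne1 hmm
    exact hne (congrArg Subtype.val (hac.path_unique ⟨p1, hp1path⟩ ⟨p2, hp2path⟩))
  have hle := pr2_rect_le μ hrect
  nlinarith [ENNReal.toReal_nonneg (a := μ A), ENNReal.toReal_nonneg (a := μ B)]

/-- A dominant edge `⟨u,v⟩` whose heads/tails are isolated and non-blue: either the dominant
path of `v` extends that of `u` by one edge, or `E_v` has probability at least `α²/16`. -/
lemma dominant_step (S : Finset V) {α : ℝ} (hα : 0 < α) {u v : V}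
    (hqv : α ≤ (μ {W | CF.Reaches W v}).toReal)
    (hqu : α ≤ (μ {W | CF.Reaches W u}).toReal)
    (hnbv : ¬ CF.Blue μ α v) (hnbu : ¬ CF.Blue μ α u)
    (hdom : CF.Dominant μ S α u v)
    {Pv : G.Walk s v} (hPv : CF.IsDominantPath μ α v Pv)
    {Pu : G.Walk s u} (hPu : CF.IsDominantPath μ α u Pu) :
    Pv.length = Pu.length + 1 ∨
      α ^ 2 / 16 ≤ ((μ.prod μ) {p | CF.EventE μ S v p}).toReal := by
  obtain ⟨hu, hv, hadj, -, hbad⟩ := hdom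
  have he : s(u, v) ∈ Pv.edges := dominant_edge_mem μ hα hqv hPv hbad
  obtain ⟨Q, hQadj, hQeq, hQpath, -, hlen⟩ :=
    path_concat_decomp (huv := hadj.ne) Pv hPv.1 he
  by_cases hQ : Q = Pu
  · left
    rw [hlen, hQ]
  · right
    set A : Set (CF.WalkSpace G s ℓ) :=
      {W | ∃ h : CF.Reaches W v, CF.inducedPath W v h = Pv} ∩ {W | CF.Light μ W} with hAdef
    set B : Set (CF.WalkSpace G s ℓ) :=
      {W | ∃ h : CF.Reaches W u, CF.inducedPath W u h = Pu} ∩ {W | CF.Light μ W} with hBdef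
    have hprA : α / 4 ≤ (μ A).toReal := by
      have hlight := light_lb μ hnbv {W | ∃ h : CF.Reaches W v, CF.inducedPath W v h = Pv}
        (by rintro W ⟨h, -⟩; exact h)
      have := hPv.2.1
      linarith
    have hprB : α / 4 ≤ (μ B).toReal := by
      have hlight := light_lb μ hnbu {W | ∃ h : CF.Reaches W u, CF.inducedPath W u h = Pu}
        (by rintro W ⟨h, -⟩; exact h)
      have := hPu.2.1
      linarith
    have hrect : A ×ˢ B ⊆ {p | CF.EventE μ S v p} := by
      rintro ⟨W1, W2⟩ ⟨⟨⟨h1, heq1⟩, hl1⟩, ⟨⟨h2, heq2⟩, hl2⟩⟩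
      refine ⟨hl1, hl2, Or.inr ⟨u, hu, hv, hadj, Or.inl ⟨h1, h2, ?_⟩⟩⟩
      set ES : Set (Sym2 V) := {e | e ∈ (CF.inducedPath W1 v h1).edges} ∪
        {e | e ∈ (CF.inducedPath W2 u h2).edges} ∪ {s(u, v)} with hESdef
      set H : SimpleGraph V := SimpleGraph.fromEdgeSet ES with hHdef
      intro hac
      have hP1 : CF.inducedPath W1 v h1 = Pv :=
        (rfl : CF.inducedPath W1 v h1 = _).trans heq1
      have hP2 : CF.inducedPath W2 u h2 = Pu := heq2
      have hmemES : ∀ {a b : V} (p : G.Walk a b),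
          (∀ e ∈ p.edges, e ∈ ES) → ∀ e ∈ p.edges, e ∈ H.edgeSet := by
        intro a b p hp e hep
        rw [hHdef, edgeSet_fromEdgeSet]
        exact ⟨hp e hep,
          fun hdiag => G.not_isDiag_of_mem_edgeSet (p.edges_subset_edgeSet hep) hdiag⟩
      have hQsub : ∀ e ∈ Q.edges, e ∈ ES := by
        intro e heQ
        have : e ∈ Pv.edges := by
          rw [hQeq, Walk.edges_concat, List.concat_eq_append]
          exact List.mem_append_left _ heQ
        rw [← hP1] at this
        exact Or.inl (Or.inl this)
      have hQe : ∀ e ∈ Q.edges, e ∈ H.edgeSet := hmemES _ hQsub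
      have hPue : ∀ e ∈ Pu.edges, e ∈ H.edgeSet := by
        refine hmemES _ ?_
        intro e hePu
        rw [← hP2] at hePu
        exact Or.inl (Or.inr hePu)
      have hle : H ≤ G := by
        intro x y hxy
        rw [hHdef, fromEdgeSet_adj] at hxy
        rcases hxy.1 with (hee | hee) | hee
        · exact ((CF.inducedPath W1 v h1).adj_of_mem_edges hee)
        · exact ((CF.inducedPath W2 u h2).adj_of_mem_edges hee)
        · rw [Set.mem_singleton_iff, Sym2.eq_iff] at hee
          rcases hee with ⟨rfl, rfl⟩ | ⟨rfl, rfl⟩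
          · exact hadj
          · exact hadj.symm
      have hnet : Q.transfer H hQe ≠ Pu.transfer H hPue := by
        intro heqt
        exact hQ (transfer_inj hle heqt)
      exact hnet (congrArg Subtype.val
        (hac.path_unique ⟨Q.transfer H hQe, hQpath.transfer _⟩
          ⟨Pu.transfer H hPue, hPu.1.transfer _⟩))
    have hle := pr2_rect_le μ hrect
    nlinarith [ENNReal.toReal_nonneg (a := μ A), ENNReal.toReal_nonneg (a := μ B)]

end Dominant

section Counting

variable (μ : Measure (CF.WalkSpace G s ℓ)) [IsProbabilityMeasure μ]

lemma reaches_card_le (W : CF.WalkSpace G s ℓ) (T : Finset V) :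
    (T.filter (fun w => CF.Reaches W w)).card ≤ ℓ + 1 := by
  have hsub : T.filter (fun w => CF.Reaches W w) ⊆ W.2.1.support.toFinset := by
    intro w hw
    rw [List.mem_toFinset]
    exact (Finset.mem_filter.mp hw).2
  calc (T.filter (fun w => CF.Reaches W w)).card
      ≤ W.2.1.support.toFinset.card := Finset.card_le_card hsub
    _ ≤ W.2.1.support.length := List.toFinset_card_le _
    _ = W.2.1.length + 1 := Walk.length_support _
    _ ≤ ℓ + 1 := by have := W.2.2; omega

lemma event_reaches {S : Finset V} {w : V}
    {p : CF.WalkSpace G s ℓ × CF.WalkSpace G s ℓ} (h : CF.EventE μ S w p) :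
    CF.Reaches p.1 w ∨ CF.Reaches p.2 w := by
  obtain ⟨-, -, h⟩ := h
  rcases h with ⟨h1, -⟩ | ⟨u, -, -, -, (⟨h1, -⟩ | ⟨h1, -⟩)⟩
  · exact Or.inl h1
  · exact Or.inl h1
  · exact Or.inr h1

lemma sum_event_le (S T : Finset V) (hT : T ⊆ S) :
    ∑ w ∈ T, ((μ.prod μ) {p | CF.EventE μ S w p}).toReal ≤
      (2 * ((ℓ : ℝ) + 1)) * ((μ.prod μ) {p | ∃ w ∈ S, CF.EventE μ S w p}).toReal := by
  classical
  set ν := μ.prod μ with hν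
  set t : CF.WalkSpace G s ℓ × CF.WalkSpace G s ℓ → ℝ := fun p => (ν {p}).toReal with ht
  have hA : ∀ (A : Set (CF.WalkSpace G s ℓ × CF.WalkSpace G s ℓ)),
      (ν A).toReal = ∑ p ∈ Finset.univ.filter (· ∈ A), t p := by
    intro A
    have hAe : A = ⋃ p ∈ Finset.univ.filter (· ∈ A), ({p} : Set _) := by
      ext p; simp
    have h1 : ν A = ∑ p ∈ Finset.univ.filter (· ∈ A), ν {p} := by
      conv_lhs => rw [hAe]
      exact measure_biUnion_finset (fun p _ q _ hpq => Set.disjoint_singleton.mpr hpq)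
        (fun b _ => measurableSet_all2 _)
    rw [h1]
    exact ENNReal.toReal_sum (fun p _ => measure_ne_top ν _)
  calc ∑ w ∈ T, (ν {p | CF.EventE μ S w p}).toReal
      = ∑ w ∈ T, ∑ p ∈ Finset.univ, if CF.EventE μ S w p then t p else 0 := by
        refine Finset.sum_congr rfl (fun w _ => ?_)
        rw [hA {p | CF.EventE μ S w p}, Finset.sum_filter]
        simp only [Set.mem_setOf_eq]
    _ = ∑ p ∈ Finset.univ, ∑ w ∈ T, if CF.EventE μ S w p then t p else 0 :=
        Finset.sum_comm
    _ ≤ ∑ p ∈ Finset.univ, 2 * ((ℓ : ℝ) + 1) *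
        (if (∃ w ∈ S, CF.EventE μ S w p) then t p else 0) := by
        refine Finset.sum_le_sum (fun p _ => ?_)
        by_cases hE : ∃ w ∈ S, CF.EventE μ S w p
        · rw [if_pos hE]
          have hsum : ∑ w ∈ T, (if CF.EventE μ S w p then t p else 0) =
              ((T.filter (fun w => CF.EventE μ S w p)).card : ℝ) * t p := by
            rw [← Finset.sum_filter, Finset.sum_const, nsmul_eq_mul]
          rw [hsum]
          have hcb : ((T.filter (fun w => CF.EventE μ S w p)).card : ℝ) ≤
              2 * ((ℓ : ℝ) + 1) := by
            have hsub : T.filter (fun w => CF.EventE μ S w p) ⊆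
                T.filter (fun w => CF.Reaches p.1 w) ∪
                  T.filter (fun w => CF.Reaches p.2 w) := by
              intro w hw
              obtain ⟨hwT, hwE⟩ := Finset.mem_filter.mp hw
              rcases event_reaches μ hwE with h | h
              · exact Finset.mem_union_left _ (Finset.mem_filter.mpr ⟨hwT, h⟩)
              · exact Finset.mem_union_right _ (Finset.mem_filter.mpr ⟨hwT, h⟩)
            have hc1 := Finset.card_le_card hsub
            have hc2 := Finset.card_union_le (T.filter (fun w => CF.Reaches p.1 w))
              (T.filter (fun w => CF.Reaches p.2 w))
            have hc3 := reaches_card_le p.1 T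
            have hc4 := reaches_card_le p.2 T
            have : (T.filter (fun w => CF.EventE μ S w p)).card ≤ 2 * (ℓ + 1) := by omega
            calc ((T.filter (fun w => CF.EventE μ S w p)).card : ℝ)
                ≤ ((2 * (ℓ + 1) : ℕ) : ℝ) := by exact_mod_cast this
              _ = 2 * ((ℓ : ℝ) + 1) := by push_cast; ring
          exact mul_le_mul_of_nonneg_right hcb ENNReal.toReal_nonneg
        · rw [if_neg hE, mul_zero]
          refine le_of_eq (Finset.sum_eq_zero (fun w hw => ?_))
          rw [if_neg (fun hc => hE ⟨w, hT hw, hc⟩)]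
    _ = 2 * ((ℓ : ℝ) + 1) * (ν {p | ∃ w ∈ S, CF.EventE μ S w p}).toReal := by
        rw [hA {p | ∃ w ∈ S, CF.EventE μ S w p}, Finset.sum_filter]
        rw [← Finset.mul_sum]
        refine congrArg _ (Finset.sum_congr rfl (fun p _ => ?_))
        congr 1

end Counting

end Aux

/-- If `G_S` is `ε`-far from cycle-free and fewer than `ε|S|/2` vertices of `S`
are blue, then `Pr(E) ≥ ε|S|α²/(64(ℓ+1))`, where `E = ⋃_{w ∈ S} E_w`. -/
theorem stmt8 {V : Type} [Fintype V] [DecidableEq V]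
    (G : SimpleGraph V) [DecidableRel G.Adj] (d : ℕ) (hd : 1 ≤ d)
    (hdeg : ∀ v, G.degree v ≤ d)
    (ε : ℝ) (hε0 : 0 < ε) (hε1 : ε < 1)
    (S : Finset V) (s : V) (hs : s ∈ S) (ℓ : ℕ)
    (μ : MeasureTheory.Measure (CF.WalkSpace G s ℓ)) [MeasureTheory.IsProbabilityMeasure μ]
    (α : ℝ) (hα : 0 < α) (hspec : CF.Special μ S α)
    (hfar : ∀ F : Finset (Sym2 V), ↑F ⊆ (CF.inducedSub G ↑S).edgeSet →
      ((CF.inducedSub G ↑S).deleteEdges ↑F).IsAcyclic →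
      ε * S.card * d < (F.card : ℝ))
    (hblue : ({v | v ∈ S ∧ CF.Blue μ α v}.ncard : ℝ) < ε * S.card / 2) :
    ε * S.card * α ^ 2 / (64 * (ℓ + 1)) ≤
      ((μ.prod μ) {p | ∃ w ∈ S, CF.EventE μ S w p}).toReal := by
  classical
  set ν := μ.prod μ with hν
  set T : Finset V := S.filter
    (fun w => α ^ 2 / 16 ≤ (ν {p | CF.EventE μ S w p}).toReal) with hT
  have hTlarge : ε * S.card / 2 ≤ (T.card : ℝ) := by
    by_contra hTsmall
    push_neg at hTsmall
    set B' : Finset V := S.filter (fun v => CF.Blue μ α v) with hB'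
    have hBcard : (B'.card : ℝ) < ε * S.card / 2 := by
      have hset : {v | v ∈ S ∧ CF.Blue μ α v} = (↑B' : Set V) := by
        ext v; simp [hB']
      rw [hset, Set.ncard_coe_finset] at hblue
      exact hblue
    set D : Finset V := B' ∪ T with hD
    have hDcard : (D.card : ℝ) < ε * S.card := by
      have h1 := Finset.card_union_le B' T
      have h2 : (D.card : ℝ) ≤ (B'.card : ℝ) + T.card := by exact_mod_cast h1
      linarith
    set GS := CF.inducedSub G (↑S : Set V) with hGS
    set F : Finset (Sym2 V) := Finset.univ.filter
      (fun e => e ∈ GS.edgeSet ∧ ∃ v ∈ D, v ∈ e) with hF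
    have hFsub : (↑F : Set (Sym2 V)) ⊆ GS.edgeSet := by
      intro e he
      simp only [hF, Finset.coe_filter, Set.mem_setOf_eq] at he
      exact he.2.1
    have hFcard : (F.card : ℝ) ≤ (D.card : ℝ) * d := by
      have hsub : F ⊆ D.biUnion (fun v => Finset.univ.filter
          (fun e : Sym2 V => e ∈ GS.edgeSet ∧ v ∈ e)) := by
        intro e he
        simp only [hF, Finset.mem_filter] at he
        obtain ⟨-, he1, v, hv, hve⟩ := he
        exact Finset.mem_biUnion.mpr
          ⟨v, hv, Finset.mem_filter.mpr ⟨Finset.mem_univ _, he1, hve⟩⟩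
      have hdegv : ∀ v : V, (Finset.univ.filter
          (fun e : Sym2 V => e ∈ GS.edgeSet ∧ v ∈ e)).card ≤ d := by
        intro v
        have hmaps : ∀ e ∈ Finset.univ.filter
            (fun e : Sym2 V => e ∈ GS.edgeSet ∧ v ∈ e),
            (if h : v ∈ e then Sym2.Mem.other' h else v) ∈ G.neighborFinset v := by
          intro e he
          obtain ⟨-, he1, hve⟩ := Finset.mem_filter.mp he
          rw [dif_pos hve]
          rw [SimpleGraph.mem_neighborFinset]
          have hspec2 := Sym2.other_spec' hve
          rw [← hspec2] at he1
          have : GS.Adj v (Sym2.Mem.other' hve) := GS.mem_edgeSet.mp he1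
          rw [hGS] at this
          exact this.2.2
        have hinj : Set.InjOn (fun e : Sym2 V => if h : v ∈ e then Sym2.Mem.other' h else v)
            ↑(Finset.univ.filter (fun e : Sym2 V => e ∈ GS.edgeSet ∧ v ∈ e)) := by
          intro e1 h1 e2 h2 heq
          simp only [Finset.coe_filter, Set.mem_setOf_eq] at h1 h2
          have hv1 : v ∈ e1 := h1.2.2
          have hv2 : v ∈ e2 := h2.2.2
          simp only [dif_pos hv1, dif_pos hv2] at heq
          rw [← Sym2.other_spec' hv1, ← Sym2.other_spec' hv2, heq]
        have := Finset.card_le_card_of_injOn _ hmaps hinj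
        calc (Finset.univ.filter (fun e : Sym2 V => e ∈ GS.edgeSet ∧ v ∈ e)).card
            ≤ (G.neighborFinset v).card := this
          _ = G.degree v := rfl
          _ ≤ d := hdeg v
      have hcard1 := Finset.card_le_card hsub
      have hcard2 := Finset.card_biUnion_le (s := D) (t := fun v => Finset.univ.filter
          (fun e : Sym2 V => e ∈ GS.edgeSet ∧ v ∈ e))
      have hcard3 : ∑ v ∈ D, (Finset.univ.filter
          (fun e : Sym2 V => e ∈ GS.edgeSet ∧ v ∈ e)).card ≤ D.card * d := by
        calc ∑ v ∈ D, (Finset.univ.filter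
            (fun e : Sym2 V => e ∈ GS.edgeSet ∧ v ∈ e)).card
            ≤ ∑ _v ∈ D, d := Finset.sum_le_sum (fun v _ => hdegv v)
          _ = D.card * d := by rw [Finset.sum_const, smul_eq_mul]
      have : F.card ≤ D.card * d := le_trans hcard1 (le_trans hcard2 hcard3)
      exact_mod_cast this
    have hdpos : (0 : ℝ) < d := by exact_mod_cast hd
    set G'' := GS.deleteEdges ↑F with hG''
    have hnac : ¬ G''.IsAcyclic := by
      intro hac
      have hlt := hfar F hFsub hac
      have : (D.card : ℝ) * d < ε * S.card * d :=
        mul_lt_mul_of_pos_right hDcard hdpos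
      linarith
    unfold SimpleGraph.IsAcyclic at hnac
    push_neg at hnac
    obtain ⟨v₀, c, hc⟩ := hnac
    have hedgeFacts : ∀ x y : V, G''.Adj x y →
        (x ∈ S ∧ y ∈ S ∧ G.Adj x y ∧ x ∉ D ∧ y ∉ D) := by
      intro x y hxy
      rw [hG'', SimpleGraph.deleteEdges_adj] at hxy
      obtain ⟨hGSadj, hnF⟩ := hxy
      have hGSadj' : x ∈ (↑S : Set V) ∧ y ∈ (↑S : Set V) ∧ G.Adj x y := by
        rw [hGS] at hGSadj; exact hGSadj
      obtain ⟨hxS, hyS, hxyG⟩ := hGSadj'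
      refine ⟨Finset.mem_coe.mp hxS, Finset.mem_coe.mp hyS, hxyG, ?_, ?_⟩ <;>
        intro hmem <;> apply hnF <;> rw [Finset.mem_coe, hF, Finset.mem_filter]
      · exact ⟨Finset.mem_univ _, GS.mem_edgeSet.mpr hGSadj,
          ⟨x, hmem, Sym2.mem_mk_left _ _⟩⟩
      · exact ⟨Finset.mem_univ _, GS.mem_edgeSet.mpr hGSadj,
          ⟨y, hmem, Sym2.mem_mk_right _ _⟩⟩
    have hgood : ∀ x, x ∈ S → x ∉ D →
        (¬ CF.Blue μ α x ∧ (ν {p | CF.EventE μ S x p}).toReal < α ^ 2 / 16 ∧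
          CF.Isolated μ α x) := by
      intro x hxS hxD
      have hnB : ¬ CF.Blue μ α x := fun hB =>
        hxD (Finset.mem_union_left _ (Finset.mem_filter.mpr ⟨hxS, hB⟩))
      have hnT : ¬ (α ^ 2 / 16 ≤ (ν {p | CF.EventE μ S x p}).toReal) := fun hT' =>
        hxD (Finset.mem_union_right _ (Finset.mem_filter.mpr ⟨hxS, hT'⟩))
      have hIso := (isolated_or_event μ S hα (hspec x hxS) hnB).resolve_right hnT
      exact ⟨hnB, not_le.mp hnT, hIso⟩
    have hdir : ∀ x y, G''.Adj x y →
        CF.Dominant μ S α x y ∨ CF.Dominant μ S α y x := by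
      intro x y hxy
      obtain ⟨hxS, hyS, hadj, hxD, hyD⟩ := hedgeFacts x y hxy
      obtain ⟨hnBx, hTx, hIx⟩ := hgood x hxS hxD
      obtain ⟨hnBy, hTy, hIy⟩ := hgood y hyS hyD
      by_contra hcon
      push_neg at hcon
      exact absurd (recessive_event μ S hα hxS hyS hadj (hspec y hyS) (hspec x hxS)
        hnBy hnBx hIy hIx hcon.1 hcon.2) (not_le.mpr hTy)
    set f : V → ℕ := fun x =>
      if h : CF.Isolated μ α x then (Classical.choose h).length else 0 with hfdef
    have hflen : ∀ x (hI : CF.Isolated μ α x) (P : G.Walk s x),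
        CF.IsDominantPath μ α x P → f x = P.length := by
      intro x hI P hP
      simp only [hfdef, dif_pos hI]
      exact congrArg Walk.length (dominantPath_unique μ (Classical.choose_spec hI) hP)
    have hstep : ∀ x y, G''.Adj x y → CF.Dominant μ S α x y → f y = f x + 1 := by
      intro x y hxy hdom
      obtain ⟨hxS, hyS, hadj, hxD, hyD⟩ := hedgeFacts x y hxy
      obtain ⟨hnBx, hTx, hIx⟩ := hgood x hxS hxD
      obtain ⟨hnBy, hTy, hIy⟩ := hgood y hyS hyD
      rcases dominant_step μ S hα (hspec y hyS) (hspec x hxS) hnBy hnBx hdom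
          (Classical.choose_spec hIy) (Classical.choose_spec hIx) with hlen | hev
      · rw [hflen y hIy _ (Classical.choose_spec hIy),
          hflen x hIx _ (Classical.choose_spec hIx)]
        exact hlen
      · exact absurd hev (not_le.mpr hTy)
    have hsupne : (c.support.toFinset).Nonempty :=
      ⟨v₀, List.mem_toFinset.mpr (Walk.start_mem_support c)⟩
    obtain ⟨vm, hvmmem, hvmmax⟩ := Finset.exists_max_image c.support.toFinset f hsupne
    have hvm : vm ∈ c.support := List.mem_toFinset.mp hvmmem
    obtain ⟨c', hc', hrot⟩ : ∃ c'' : G''.Walk vm vm, c''.IsCycle ∧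
        c''.support.tail ~r c.support.tail :=
      ⟨c.rotate vm hvm, hc.rotate hvm, Walk.support_rotate c vm hvm⟩
    have hlen3 : 3 ≤ c'.length := hc'.three_le_length
    obtain ⟨x₁, hadj1, q, hc'eq⟩ : ∃ (x₁ : V) (h : G''.Adj vm x₁) (q : G''.Walk x₁ vm),
        c' = Walk.cons h q := by
      cases hcc : c' with
      | nil => rw [hcc] at hlen3; simp at hlen3
      | cons h q => exact ⟨_, h, q, rfl⟩
    obtain ⟨y, r, hadj2, hqeq⟩ : ∃ (y : V) (r : G''.Walk x₁ y) (h2 : G''.Adj y vm),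
        q = r.concat h2 := by
      cases hqq : q with
      | nil =>
        rw [hc'eq, hqq] at hlen3
        simp at hlen3
      | cons hq q' =>
        obtain ⟨z, r, h', hre⟩ := Walk.exists_cons_eq_concat hq q'
        exact ⟨z, r, h', hre⟩
    have htail : c'.support.tail = q.support := by
      rw [hc'eq, Walk.support_cons]
      rfl
    have hx₁sup : x₁ ∈ c.support := by
      have h1 : x₁ ∈ c'.support.tail := by
        rw [htail]; exact Walk.start_mem_support q
      exact List.mem_of_mem_tail (hrot.mem_iff.mp h1)
    have hysup : y ∈ c.support := by
      have h1 : y ∈ c'.support.tail := by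
        rw [htail, hqeq, Walk.support_concat]
        simp only [List.concat_eq_append, List.mem_append]
        exact Or.inl (Walk.end_mem_support r)
      exact List.mem_of_mem_tail (hrot.mem_iff.mp h1)
    have hxyne : x₁ ≠ y := by
      intro heqxy
      have hnodup := hc'.isCircuit.isTrail.edges_nodup
      rw [hc'eq, Walk.edges_cons, List.nodup_cons] at hnodup
      apply hnodup.1
      rw [hqeq, Walk.edges_concat, List.concat_eq_append]
      have : s(vm, x₁) = s(y, vm) := by
        rw [heqxy, Sym2.eq_swap]
      rw [this]
      simp
    have hdom1 : CF.Dominant μ S α x₁ vm := by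
      rcases hdir vm x₁ hadj1 with hdom | hdom
      · have h1 := hstep vm x₁ hadj1 hdom
        have hle := hvmmax x₁ (List.mem_toFinset.mpr hx₁sup)
        omega
      · exact hdom
    have hdom2 : CF.Dominant μ S α y vm := by
      rcases hdir y vm hadj2 with hdom | hdom
      · exact hdom
      · have h1 := hstep vm y hadj2.symm hdom
        have hle := hvmmax y (List.mem_toFinset.mpr hysup)
        omega
    have hIvm : CF.Isolated μ α vm := hdom1.2.2.2.1
    have hPspec := Classical.choose_spec hIvm
    have hvmS : vm ∈ S := (hedgeFacts vm x₁ hadj1).1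
    have hqvm : α ≤ (μ {W | CF.Reaches W vm}).toReal := hspec vm hvmS
    have hm1 : s(x₁, vm) ∈ (Classical.choose hIvm).edges :=
      dominant_edge_mem μ hα hqvm hPspec hdom1.2.2.2.2
    have hm2 : s(y, vm) ∈ (Classical.choose hIvm).edges :=
      dominant_edge_mem μ hα hqvm hPspec hdom2.2.2.2.2
    exact hxyne (endpoint_edge_unique _ hPspec.1 hm1 hm2)
  -- final arithmetic
  have hsum1 : (T.card : ℝ) * (α ^ 2 / 16) ≤
      ∑ w ∈ T, (ν {p | CF.EventE μ S w p}).toReal := by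
    have h1 := Finset.card_nsmul_le_sum T
      (fun w => (ν {p | CF.EventE μ S w p}).toReal) (α ^ 2 / 16)
      (fun w hw => (Finset.mem_filter.mp hw).2)
    rwa [nsmul_eq_mul] at h1
  have hsum2 := sum_event_le μ S T (Finset.filter_subset _ _)
  rw [div_le_iff₀ (by positivity)]
  have h1 : ε * S.card / 2 * (α ^ 2 / 16) ≤ (T.card : ℝ) * (α ^ 2 / 16) :=
    mul_le_mul_of_nonneg_right hTlarge (by positivity)
  nlinarith [hsum1, hsum2]
end
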